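/- arXiv:1801.07830 — 4 statements merged into one kernel-verified Lean document; each statement's English description precedes it below -/
import Mathlib

section
/- Let S be an α-stable subordinator with index α ∈ (0,1). If θ ∈ [1/α, ∞), then almost surely, for every T > 0, the Lebesgue–Stieltjes integral ∫_0^T t^{-θ} dS_t is infinite. -/
open MeasureTheory ProbabilityTheory Filter Set
open scoped ENNReal NNReal Topology

/-- An `α`-stable subordinator on a probability space `Ω`: a real-valued process with
`S 0 = 0`, stationary independent increments, almost surely nondecreasing right-continuous
sample paths, and Laplace transform `E[exp (-λ S t)] = exp (-t λ^α)`.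
The process is extended by `0` to nonpositive times, so that the a.s. path regularity on
`[0, ∞)` can be expressed as regularity of the extended path on all of `ℝ`. -/
structure StableSubordinator (Ω : Type*) [MeasureSpace Ω] [IsProbabilityMeasure (ℙ : Measure Ω)]
    (α : ℝ) where
  S : ℝ → Ω → ℝ
  measurable : ∀ t : ℝ, Measurable (S t)
  zero_of_nonpos : ∀ t : ℝ, t ≤ 0 → ∀ ω, S t ω = 0
  path : ∀ᵐ ω : Ω, Monotone (fun t => S t ω) ∧
    ∀ x : ℝ, ContinuousWithinAt (fun t => S t ω) (Set.Ici x) x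
  indep_increments : ∀ (n : ℕ) (t : Fin (n + 1) → ℝ), Monotone t → (∀ i, 0 ≤ t i) →
    iIndepFun (m := fun _ : Fin n => Real.measurableSpace)
      (fun i ω => S (t i.succ) ω - S (t i.castSucc) ω) ℙ
  stationary_increments : ∀ s t : ℝ, 0 ≤ s → s ≤ t →
    Measure.map (fun ω => S t ω - S s ω) ℙ = Measure.map (S (t - s)) ℙ
  laplace : ∀ lam : ℝ, 0 < lam → ∀ t : ℝ, 0 ≤ t →
    ∫ ω, Real.exp (-lam * S t ω) ∂ℙ = Real.exp (-t * lam ^ α)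

open Classical in
/-- The Lebesgue–Stieltjes measure induced by a nondecreasing right-continuous path
(junk value `0` if the path is not such). -/
noncomputable def pathMeasure (f : ℝ → ℝ) : Measure ℝ :=
  if h : Monotone f ∧ ∀ x : ℝ, ContinuousWithinAt f (Set.Ici x) x then
    StieltjesFunction.measure ⟨f, h.1, h.2⟩ else 0

namespace SingularBlowUp

/-- The threshold used for the dyadic increments. -/
noncomputable def xx (α : ℝ) (n : ℕ) : ℝ := 2⁻¹ * ((2 : ℝ)⁻¹ ^ (n + 1)) ^ (α⁻¹)

lemma bb_pos (n : ℕ) : (0 : ℝ) < 2⁻¹ ^ n := pow_pos (by norm_num) n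

lemma bb_anti {m n : ℕ} (h : m ≤ n) : ((2 : ℝ)⁻¹) ^ n ≤ 2⁻¹ ^ m :=
  pow_le_pow_of_le_one (by norm_num) (by norm_num) h

lemma bb_sub (n : ℕ) : (2 : ℝ)⁻¹ ^ n - 2⁻¹ ^ (n + 1) = 2⁻¹ ^ (n + 1) := by
  have h2 : ((2 : ℝ)⁻¹) ^ (n + 1) * 2 = 2⁻¹ ^ n := by
    rw [pow_succ]; ring
  linarith

lemma xx_pos {α : ℝ} (n : ℕ) : 0 < xx α n :=
  mul_pos (by norm_num) (Real.rpow_pos_of_pos (bb_pos _) _)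

variable {Ω : Type*} [MeasureSpace Ω] [IsProbabilityMeasure (ℙ : Measure Ω)] {α : ℝ}

/-- quantitative lower-tail bound from the Laplace transform. -/
lemma tail_bound (hα : α ∈ Set.Ioo (0 : ℝ) 1) (X : StableSubordinator Ω α)
    {h : ℝ} (hh : 0 < h) :
    ℙ {ω | X.S h ω < 2⁻¹ * h ^ (α⁻¹)} ≤ ENNReal.ofReal (Real.exp (-2⁻¹)) := by
  obtain ⟨hα0, _⟩ := hα
  set lam : ℝ := h ^ (-α⁻¹ : ℝ) with hlam
  have hlampos : 0 < lam := Real.rpow_pos_of_pos hh _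
  have hLap := X.laplace lam hlampos h hh.le
  set x : ℝ := 2⁻¹ * h ^ (α⁻¹) with hx
  set A : Set Ω := {ω | X.S h ω < x} with hA
  have hAmeas : MeasurableSet A := measurableSet_lt (X.measurable h) measurable_const
  have hSmeas : Measurable fun ω => Real.exp (-lam * X.S h ω) :=
    ((X.measurable h).const_mul _).exp
  have hbd : ∀ᵐ ω : Ω, ‖Real.exp (-lam * X.S h ω)‖ ≤ 1 := by
    filter_upwards [X.path] with ω hω
    have h0 : X.S 0 ω ≤ X.S h ω := hω.1 hh.le
    rw [X.zero_of_nonpos 0 le_rfl] at h0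
    rw [Real.norm_eq_abs, Real.abs_exp]
    have : -lam * X.S h ω ≤ 0 := by nlinarith
    calc Real.exp (-lam * X.S h ω) ≤ Real.exp 0 := Real.exp_le_exp.2 this
      _ = 1 := Real.exp_zero
  have hint : Integrable (fun ω => Real.exp (-lam * X.S h ω)) ℙ :=
    Integrable.mono' (integrable_const 1) hSmeas.aestronglyMeasurable hbd
  have hmono : ∀ ω, A.indicator (fun _ => Real.exp (-lam * x)) ω
      ≤ Real.exp (-lam * X.S h ω) := by
    intro ω
    by_cases hω : ω ∈ A
    · rw [Set.indicator_of_mem hω]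
      have hlt : X.S h ω < x := hω
      exact Real.exp_le_exp.2 (by nlinarith)
    · rw [Set.indicator_of_notMem hω]
      positivity
  have hle : Real.exp (-lam * x) * (ℙ A).toReal ≤ Real.exp (-h * lam ^ α) := by
    calc Real.exp (-lam * x) * (ℙ A).toReal
        = ∫ ω, A.indicator (fun _ => Real.exp (-lam * x)) ω ∂ℙ := by
          rw [integral_indicator_const _ hAmeas, smul_eq_mul, measureReal_def]; ring
      _ ≤ ∫ ω, Real.exp (-lam * X.S h ω) ∂ℙ :=
          integral_mono ((integrable_const _).indicator hAmeas) hint hmono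
      _ = _ := hLap
  have hlamx : lam * x = 2⁻¹ := by
    rw [hlam, hx]
    rw [show h ^ (-α⁻¹ : ℝ) * (2⁻¹ * h ^ (α⁻¹ : ℝ)) =
        2⁻¹ * (h ^ (-α⁻¹ : ℝ) * h ^ (α⁻¹ : ℝ)) by ring, ← Real.rpow_add hh]
    norm_num
  have hhl : h * lam ^ α = 1 := by
    rw [hlam, ← Real.rpow_mul hh.le]
    rw [show -α⁻¹ * α = -1 by field_simp]
    rw [Real.rpow_neg_one]
    field_simp
  have h1 : -lam * x = -2⁻¹ := by rw [neg_mul]; rw [hlamx]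
  have h2 : -h * lam ^ α = -1 := by rw [neg_mul]; rw [hhl]
  rw [h1, h2] at hle
  have hexp : Real.exp (-1) = Real.exp (-2⁻¹) * Real.exp (-2⁻¹) := by
    rw [← Real.exp_add]; norm_num
  have htoReal : (ℙ A).toReal ≤ Real.exp (-2⁻¹) := by
    have hpos := Real.exp_pos (-2⁻¹ : ℝ)
    nlinarith
  calc ℙ A = ENNReal.ofReal (ℙ A).toReal := (ENNReal.ofReal_toReal (measure_ne_top _ _)).symm
    _ ≤ ENNReal.ofReal (Real.exp (-2⁻¹)) := ENNReal.ofReal_le_ofReal htoReal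

/-- probability lower bound for the dyadic increment event. -/
lemma prob_B (hα : α ∈ Set.Ioo (0 : ℝ) 1) (X : StableSubordinator Ω α) (n : ℕ) :
    1 - ENNReal.ofReal (Real.exp (-2⁻¹)) ≤
      ℙ {ω | xx α n ≤ X.S ((2 : ℝ)⁻¹ ^ n) ω - X.S (2⁻¹ ^ (n + 1)) ω} := by
  have hmap := X.stationary_increments (2⁻¹ ^ (n + 1)) (2⁻¹ ^ n) (bb_pos _).le
    (bb_anti n.le_succ)
  rw [bb_sub] at hmap
  have hD : Measurable fun ω => X.S (2⁻¹ ^ n) ω - X.S (2⁻¹ ^ (n + 1)) ω :=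
    (X.measurable _).sub (X.measurable _)
  have e1 : {ω | xx α n ≤ X.S ((2 : ℝ)⁻¹ ^ n) ω - X.S (2⁻¹ ^ (n + 1)) ω}
      = (fun ω => X.S ((2 : ℝ)⁻¹ ^ n) ω - X.S (2⁻¹ ^ (n + 1)) ω) ⁻¹' Ici (xx α n) := rfl
  rw [e1, ← Measure.map_apply hD measurableSet_Ici, hmap,
    Measure.map_apply (X.measurable _) measurableSet_Ici]
  have hcompl : ℙ ((X.S (2⁻¹ ^ (n + 1)) ⁻¹' Ici (xx α n))ᶜ)
      ≤ ENNReal.ofReal (Real.exp (-2⁻¹)) := by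
    have heq : (X.S (2⁻¹ ^ (n + 1)) ⁻¹' Ici (xx α n))ᶜ
        = {ω | X.S (2⁻¹ ^ (n + 1)) ω < 2⁻¹ * ((2 : ℝ)⁻¹ ^ (n + 1)) ^ (α⁻¹)} := by
      ext ω; simp [xx, not_le]
    rw [heq]
    exact tail_bound hα X (bb_pos (n + 1))
  have hms : MeasurableSet (X.S (2⁻¹ ^ (n + 1)) ⁻¹' Ici (xx α n)) :=
    (X.measurable _) measurableSet_Ici
  have h3 : ℙ ((X.S (2⁻¹ ^ (n + 1)) ⁻¹' Ici (xx α n))ᶜ)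
      = 1 - ℙ (X.S (2⁻¹ ^ (n + 1)) ⁻¹' Ici (xx α n)) := prob_compl_eq_one_sub hms
  rw [h3] at hcompl
  have := tsub_le_iff_left.1 hcompl
  exact tsub_le_iff_left.2 (by rwa [add_comm] at this)

/-- the dyadic increment events are independent. -/
lemma indep_B (X : StableSubordinator Ω α) :
    iIndepSet (fun n : ℕ =>
      {ω | xx α n ≤ X.S ((2 : ℝ)⁻¹ ^ n) ω - X.S (2⁻¹ ^ (n + 1)) ω}) ℙ := by
  set B : ℕ → Set Ω := fun n =>
    {ω | xx α n ≤ X.S ((2 : ℝ)⁻¹ ^ n) ω - X.S (2⁻¹ ^ (n + 1)) ω} with hB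
  have hBmeas : ∀ n, MeasurableSet (B n) := fun n =>
    measurableSet_le measurable_const ((X.measurable _).sub (X.measurable _))
  rw [iIndepSet_iff_meas_biInter hBmeas]
  intro s
  set N := s.sup id with hN
  have hsN : ∀ n ∈ s, n ≤ N := fun n hn => Finset.le_sup (f := id) hn
  set t : Fin (N + 2) → ℝ := fun i => (2 : ℝ)⁻¹ ^ (N + 1 - (i : ℕ)) with ht
  have htmono : Monotone t := fun i j hij => bb_anti (Nat.sub_le_sub_left hij _)
  have htnn : ∀ i, 0 ≤ t i := fun i => (bb_pos _).le
  have hind := X.indep_increments (N + 1) t htmono htnn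
  set e : ℕ → Fin (N + 1) := fun n => ⟨N - n, Nat.lt_succ_of_le (Nat.sub_le _ _)⟩ with he
  have hg : ∀ n ∈ s, (fun ω => X.S (t (e n).succ) ω - X.S (t (e n).castSucc) ω) ⁻¹'
      Ici (xx α (N - ((e n : ℕ)))) = B n := by
    intro n hn
    have hnN := hsN n hn
    have hsucc : t ((e n).succ) = (2 : ℝ)⁻¹ ^ n := by
      show (2 : ℝ)⁻¹ ^ (N + 1 - (((e n).succ : Fin (N + 2)) : ℕ)) = _
      rw [Fin.val_succ]
      congr 1
      show N + 1 - ((N - n) + 1) = n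
      omega
    have hcast : t ((e n).castSucc) = (2 : ℝ)⁻¹ ^ (n + 1) := by
      show (2 : ℝ)⁻¹ ^ (N + 1 - (((e n).castSucc : Fin (N + 2)) : ℕ)) = _
      rw [Fin.coe_castSucc]
      congr 1
      show N + 1 - (N - n) = n + 1
      omega
    have hxx : N - ((e n : ℕ)) = n := by
      show N - (N - n) = n
      omega
    rw [hsucc, hcast, hxx]
    rfl
  have hinj : ∀ m ∈ s, ∀ n ∈ s, e m = e n → m = n := by
    intro m hm n hn hmn
    have h1 : N - m = N - n := congrArg Fin.val hmn
    have := hsN m hm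
    have := hsN n hn
    omega
  have key := (iIndepFun_iff_measure_inter_preimage_eq_mul.mp hind)
    (s.image e) (sets := fun i => Ici (xx α (N - (i : ℕ)))) (fun i _ => measurableSet_Ici)
  rw [Finset.set_biInter_finset_image, Finset.prod_image hinj] at key
  calc ℙ (⋂ n ∈ s, B n) = ℙ (⋂ n ∈ s, (fun ω => X.S (t (e n).succ) ω
        - X.S (t (e n).castSucc) ω) ⁻¹' Ici (xx α (N - ((e n : ℕ))))) := by
        congr 1
        exact (Set.iInter₂_congr hg).symm
    _ = ∏ n ∈ s, ℙ ((fun ω => X.S (t (e n).succ) ω - X.S (t (e n).castSucc) ω) ⁻¹'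
          Ici (xx α (N - ((e n : ℕ))))) := key
    _ = ∏ n ∈ s, ℙ (B n) := Finset.prod_congr rfl fun n hn => by rw [hg n hn]

/-- the key real-power computation. -/
lemma key_rpow {θ : ℝ} (hα : α ∈ Set.Ioo (0 : ℝ) 1) (hθ : 1 / α ≤ θ) (n : ℕ) :
    (2⁻¹ : ℝ) ^ (α⁻¹) ≤ ((2⁻¹ : ℝ) ^ n) ^ (-θ) * ((2⁻¹ : ℝ) ^ (n + 1)) ^ (α⁻¹) := by
  have h2 : (0 : ℝ) < 2⁻¹ := by norm_num
  have hinv : α⁻¹ ≤ θ := by rwa [← one_div]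
  rw [← Real.rpow_natCast (2⁻¹ : ℝ) n, ← Real.rpow_natCast (2⁻¹ : ℝ) (n + 1),
    ← Real.rpow_mul h2.le, ← Real.rpow_mul h2.le, ← Real.rpow_add h2]
  apply Real.rpow_le_rpow_of_exponent_ge h2 (by norm_num)
  push_cast
  nlinarith [Nat.cast_nonneg (α := ℝ) n]

/-- the deterministic part: divergence of the singular integral along a path having
infinitely many large dyadic increments. -/
lemma det_blowup {θ : ℝ} (hα : α ∈ Set.Ioo (0 : ℝ) 1) (hθ : 1 / α ≤ θ) {f : ℝ → ℝ}
    (hf : Monotone f ∧ ∀ x : ℝ, ContinuousWithinAt f (Set.Ici x) x)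
    (hfreq : {n : ℕ | xx α n ≤ f ((2 : ℝ)⁻¹ ^ n) - f (2⁻¹ ^ (n + 1))}.Infinite)
    {T : ℝ} (hT : 0 < T) :
    ∫⁻ t in Set.Ioc (0 : ℝ) T, ENNReal.ofReal (t ^ (-θ)) ∂(pathMeasure f) = ∞ := by
  have hθpos : 0 < θ := lt_of_lt_of_le (div_pos one_pos hα.1) hθ
  obtain ⟨k, hk⟩ := exists_pow_lt_of_lt_one hT (by norm_num : (2 : ℝ)⁻¹ < 1)
  set G : Set ℕ := {n | xx α n ≤ f ((2 : ℝ)⁻¹ ^ n) - f (2⁻¹ ^ (n + 1))} ∩ Set.Ici k with hG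
  have hGinf : G.Infinite := by
    apply (hfreq.diff (Set.finite_Iio k)).mono
    intro n hn
    exact ⟨hn.1, Set.mem_Ici.2 (not_lt.1 hn.2)⟩
  haveI := hGinf.to_subtype
  rw [pathMeasure, dif_pos hf]
  set F : StieltjesFunction ℝ := ⟨f, hf.1, hf.2⟩ with hF
  set C : ℝ≥0∞ := ENNReal.ofReal (2⁻¹ * (2⁻¹ : ℝ) ^ (α⁻¹ : ℝ)) with hC
  have hC0 : C ≠ 0 := by
    rw [hC, Ne, ENNReal.ofReal_eq_zero, not_le]
    positivity
  have hmeasur : Measurable fun t : ℝ => ENNReal.ofReal (t ^ (-θ)) :=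
    (measurable_id.pow_const _).ennreal_ofReal
  have term_bound : ∀ n : G, C ≤ ∫⁻ t in Set.Ioc ((2 : ℝ)⁻¹ ^ ((n : ℕ) + 1)) (2⁻¹ ^ (n : ℕ)),
      ENNReal.ofReal (t ^ (-θ)) ∂F.measure := by
    rintro ⟨n, hn1, _⟩
    have hμ : F.measure (Set.Ioc ((2 : ℝ)⁻¹ ^ (n + 1)) (2⁻¹ ^ n))
        = ENNReal.ofReal (f (2⁻¹ ^ n) - f (2⁻¹ ^ (n + 1))) := by
      rw [StieltjesFunction.measure_Ioc]
    calc C ≤ ENNReal.ofReal (((2⁻¹ : ℝ) ^ n) ^ (-θ) * xx α n) := by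
          rw [hC]
          apply ENNReal.ofReal_le_ofReal
          rw [xx, show ((2⁻¹ : ℝ) ^ n) ^ (-θ) * (2⁻¹ * ((2 : ℝ)⁻¹ ^ (n + 1)) ^ (α⁻¹)) =
            2⁻¹ * (((2⁻¹ : ℝ) ^ n) ^ (-θ) * ((2 : ℝ)⁻¹ ^ (n + 1)) ^ (α⁻¹)) by ring]
          have := key_rpow hα hθ n
          nlinarith
      _ = ENNReal.ofReal (((2⁻¹ : ℝ) ^ n) ^ (-θ)) * ENNReal.ofReal (xx α n) := by
          rw [← ENNReal.ofReal_mul (by positivity)]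
      _ ≤ ENNReal.ofReal (((2⁻¹ : ℝ) ^ n) ^ (-θ)) *
            F.measure (Set.Ioc ((2 : ℝ)⁻¹ ^ (n + 1)) (2⁻¹ ^ n)) := by
          apply mul_le_mul_right
          rw [hμ]
          exact ENNReal.ofReal_le_ofReal hn1
      _ = ∫⁻ _ in Set.Ioc ((2 : ℝ)⁻¹ ^ (n + 1)) (2⁻¹ ^ n),
            ENNReal.ofReal (((2⁻¹ : ℝ) ^ n) ^ (-θ)) ∂F.measure := by
          rw [setLIntegral_const]
      _ ≤ ∫⁻ t in Set.Ioc ((2 : ℝ)⁻¹ ^ (n + 1)) (2⁻¹ ^ n),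
            ENNReal.ofReal (t ^ (-θ)) ∂F.measure := by
          apply setLIntegral_mono hmeasur
          intro x hx
          apply ENNReal.ofReal_le_ofReal
          exact Real.rpow_le_rpow_of_nonpos (lt_trans (bb_pos (n + 1)) hx.1) hx.2
            (neg_nonpos.2 hθpos.le)
  have hdisj0 : Pairwise (Function.onFun Disjoint fun n : ℕ =>
      Set.Ioc ((2 : ℝ)⁻¹ ^ (n + 1)) (2⁻¹ ^ n)) := by
    intro m n hmn
    rcases lt_or_gt_of_ne hmn with h | h
    · apply Set.Ioc_disjoint_Ioc.2
      calc min ((2 : ℝ)⁻¹ ^ m) (2⁻¹ ^ n) ≤ (2 : ℝ)⁻¹ ^ n := min_le_right _ _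
        _ ≤ 2⁻¹ ^ (m + 1) := bb_anti h
        _ ≤ max ((2 : ℝ)⁻¹ ^ (m + 1)) (2⁻¹ ^ (n + 1)) := le_max_left _ _
    · apply Set.Ioc_disjoint_Ioc.2
      calc min ((2 : ℝ)⁻¹ ^ m) (2⁻¹ ^ n) ≤ (2 : ℝ)⁻¹ ^ m := min_le_left _ _
        _ ≤ 2⁻¹ ^ (n + 1) := bb_anti h
        _ ≤ max ((2 : ℝ)⁻¹ ^ (m + 1)) (2⁻¹ ^ (n + 1)) := le_max_right _ _
  have hdisj : Pairwise (Function.onFun Disjoint fun n : G =>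
      Set.Ioc ((2 : ℝ)⁻¹ ^ ((n : ℕ) + 1)) (2⁻¹ ^ (n : ℕ))) :=
    hdisj0.comp_of_injective Subtype.val_injective
  have hsub : (⋃ n : G, Set.Ioc ((2 : ℝ)⁻¹ ^ ((n : ℕ) + 1)) (2⁻¹ ^ (n : ℕ)))
      ⊆ Set.Ioc (0 : ℝ) T := by
    rintro x hx
    rw [Set.mem_iUnion] at hx
    obtain ⟨⟨n, _, hnk⟩, hx1, hx2⟩ := hx
    constructor
    · exact lt_trans (bb_pos _) hx1
    · exact le_trans hx2 (le_trans (bb_anti hnk) hk.le)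
  refine top_unique ?_
  calc (⊤ : ℝ≥0∞) = ∑' _ : G, C := (ENNReal.tsum_const_eq_top_of_ne_zero hC0).symm
    _ ≤ ∑' n : G, ∫⁻ t in Set.Ioc ((2 : ℝ)⁻¹ ^ ((n : ℕ) + 1)) (2⁻¹ ^ (n : ℕ)),
          ENNReal.ofReal (t ^ (-θ)) ∂F.measure := ENNReal.tsum_le_tsum term_bound
    _ = ∫⁻ t in ⋃ n : G, Set.Ioc ((2 : ℝ)⁻¹ ^ ((n : ℕ) + 1)) (2⁻¹ ^ (n : ℕ)),
          ENNReal.ofReal (t ^ (-θ)) ∂F.measure :=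
        (lintegral_iUnion (fun _ => measurableSet_Ioc) hdisj _).symm
    _ ≤ ∫⁻ t in Set.Ioc (0 : ℝ) T, ENNReal.ofReal (t ^ (-θ)) ∂F.measure :=
        lintegral_mono_set hsub

end SingularBlowUp

/-- If `θ ∈ [1/α, ∞)`, then almost surely, for every `T > 0`, the Lebesgue–Stieltjes
integral `∫_0^T t^(-θ) dS_t` is infinite. -/
theorem singular_integral_blow_up {Ω : Type*} [MeasureSpace Ω]
    [IsProbabilityMeasure (ℙ : Measure Ω)] {α : ℝ} (hα : α ∈ Set.Ioo (0 : ℝ) 1)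
    (X : StableSubordinator Ω α) {θ : ℝ} (hθ : 1 / α ≤ θ) :
    ∀ᵐ ω : Ω, ∀ T : ℝ, 0 < T →
      ∫⁻ t in Set.Ioc (0 : ℝ) T, ENNReal.ofReal (t ^ (-θ))
        ∂(pathMeasure (fun t => X.S t ω)) = ∞ := by
  classical
  set B : ℕ → Set Ω := fun n =>
    {ω | SingularBlowUp.xx α n ≤ X.S ((2 : ℝ)⁻¹ ^ n) ω - X.S (2⁻¹ ^ (n + 1)) ω} with hB
  have hBmeas : ∀ n, MeasurableSet (B n) := fun n =>
    measurableSet_le measurable_const ((X.measurable _).sub (X.measurable _))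
  have hp0 : (1 : ℝ≥0∞) - ENNReal.ofReal (Real.exp (-2⁻¹)) ≠ 0 := by
    rw [Ne, tsub_eq_zero_iff_le, not_le]
    exact ENNReal.ofReal_lt_one.2 (Real.exp_lt_one_iff.2 (by norm_num))
  have htsum : (∑' n, ℙ (B n)) = ∞ := by
    refine top_unique ?_
    calc (⊤ : ℝ≥0∞) = ∑' _ : ℕ, ((1 : ℝ≥0∞) - ENNReal.ofReal (Real.exp (-2⁻¹))) :=
          (ENNReal.tsum_const_eq_top_of_ne_zero hp0).symm
      _ ≤ ∑' n, ℙ (B n) := ENNReal.tsum_le_tsum fun n => SingularBlowUp.prob_B hα X n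
  have hlimsup : ℙ (limsup B atTop) = 1 :=
    ProbabilityTheory.measure_limsup_eq_one hBmeas (SingularBlowUp.indep_B X) htsum
  have hae : ∀ᵐ ω : Ω, ω ∈ limsup B atTop := by
    rw [ae_iff]
    have hcompl : ℙ ((limsup B atTop)ᶜ) = 0 := by
      rw [prob_compl_eq_one_sub (MeasurableSet.measurableSet_limsup hBmeas), hlimsup,
        tsub_self]
    exact hcompl
  filter_upwards [X.path, hae] with ω hω hmem
  intro T hT
  apply SingularBlowUp.det_blowup hα hθ hω _ hT
  rw [Filter.mem_limsup_iff_frequently_mem] at hmem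
  exact Nat.frequently_atTop_iff_infinite.1 hmem
end

section
/- Let S be an α-stable subordinator with index α ∈ (0,1), let λ > 0, and let p ∈ (0, α). Then for every T > 0, E[(∫_0^T e^{-λ(T−t)} dS_t)^p] ≤ (e^{pλ} / (e^{pλ} − 1)) · E[S_1^p]. -/
open MeasureTheory ProbabilityTheory Filter Set
open scoped ENNReal NNReal Topology

/-- Subadditivity of `x ↦ x ^ p`, `0 < p ≤ 1`, over countable sums in `ℝ≥0∞`. -/
lemma tsum_rpow_aux {f : ℕ → ℝ≥0∞} {p : ℝ} (hp : 0 < p) (hp1 : p ≤ 1) :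
    (∑' k, f k) ^ p ≤ ∑' k, f k ^ p := by
  have key : ∀ s : Finset ℕ, (∑ k ∈ s, f k) ^ p ≤ ∑ k ∈ s, f k ^ p := by
    intro s
    induction s using Finset.induction with
    | empty => simp [ENNReal.zero_rpow_of_pos hp]
    | insert _ _ h ih =>
      rw [Finset.sum_insert h, Finset.sum_insert h]
      exact le_trans (ENNReal.rpow_add_le_add_rpow _ _ hp.le hp1) (by gcongr)
  have h1 : ∑' k, f k ≤ (∑' k, f k ^ p) ^ (1 / p) := by
    rw [ENNReal.tsum_eq_iSup_sum]
    refine iSup_le fun s => ?_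
    have : ∑ k ∈ s, f k = ((∑ k ∈ s, f k) ^ p) ^ (1 / p) := by
      rw [← ENNReal.rpow_mul, mul_one_div, div_self hp.ne', ENNReal.rpow_one]
    rw [this]
    exact ENNReal.rpow_le_rpow ((key s).trans (ENNReal.sum_le_tsum s))
      (by positivity)
  calc (∑' k, f k) ^ p ≤ ((∑' k, f k ^ p) ^ (1 / p)) ^ p :=
        ENNReal.rpow_le_rpow h1 hp.le
    _ = ∑' k, f k ^ p := by
        rw [← ENNReal.rpow_mul, one_div_mul_cancel hp.ne', ENNReal.rpow_one]

/-- For `λ > 0` and `p ∈ (0, α)`, for every `T > 0`,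
`E[(∫_0^T e^(-λ(T-t)) dS_t)^p] ≤ e^(pλ) / (e^(pλ) - 1) · E[S_1^p]`. -/
theorem exponential_integral_moment_bound {Ω : Type*} [MeasureSpace Ω]
    [IsProbabilityMeasure (ℙ : Measure Ω)] {α : ℝ} (hα : α ∈ Set.Ioo (0 : ℝ) 1)
    (X : StableSubordinator Ω α) {lam p : ℝ} (hlam : 0 < lam) (hp : p ∈ Set.Ioo 0 α) :
    ∀ T : ℝ, 0 < T →
      ∫⁻ ω, (∫⁻ t in Set.Ioc (0 : ℝ) T, ENNReal.ofReal (Real.exp (-lam * (T - t)))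
          ∂(pathMeasure (fun t => X.S t ω))) ^ p ∂ℙ ≤
        ENNReal.ofReal (Real.exp (p * lam) / (Real.exp (p * lam) - 1)) *
          ∫⁻ ω, ENNReal.ofReal (X.S 1 ω ^ p) ∂ℙ := by
  obtain ⟨hα0, hα1⟩ := hα
  obtain ⟨hp0, hpα⟩ := hp
  have hp1 : p < 1 := hpα.trans hα1
  intro T hT
  set c : ℕ → ℝ≥0∞ := fun k => ENNReal.ofReal (Real.exp (-(lam * k))) with hc
  set D : ℕ → Ω → ℝ≥0∞ :=
    fun k ω => ENNReal.ofReal (X.S (T - k) ω - X.S (T - ((k : ℝ) + 1)) ω) with hD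
  have hmeasD : ∀ k, Measurable (fun ω => c k ^ p * D k ω ^ p) := by
    intro k
    exact measurable_const.mul
      ((ENNReal.continuous_rpow_const.measurable).comp
        (((X.measurable _).sub (X.measurable _)).ennreal_ofReal))
  -- a.e. pointwise bound on the Stieltjes integral
  have hpoint : ∀ᵐ ω : Ω, (∫⁻ t in Set.Ioc (0 : ℝ) T,
      ENNReal.ofReal (Real.exp (-lam * (T - t))) ∂(pathMeasure (fun t => X.S t ω))) ^ p ≤
      ∑' k, c k ^ p * D k ω ^ p := by
    filter_upwards [X.path] with ω hω
    set f : StieltjesFunction ℝ := ⟨fun t => X.S t ω, hω.1, hω.2⟩ with hf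
    have hpm : pathMeasure (fun t => X.S t ω) = f.measure := by
      rw [pathMeasure, dif_pos hω]
    rw [hpm]
    have hsub : Set.Ioc (0 : ℝ) T ⊆ ⋃ k : ℕ, Set.Ioc (T - ((k : ℝ) + 1)) (T - k) := by
      intro t ht
      refine mem_iUnion.2 ⟨⌊T - t⌋₊, ?_⟩
      have h0 : 0 ≤ T - t := by linarith [ht.2]
      have h1 := Nat.floor_le h0
      have h2 := Nat.lt_floor_add_one (T - t)
      exact ⟨by linarith, by linarith⟩
    have hI : ∫⁻ t in Set.Ioc (0 : ℝ) T,
        ENNReal.ofReal (Real.exp (-lam * (T - t))) ∂f.measure ≤ ∑' k, c k * D k ω := by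
      calc ∫⁻ t in Set.Ioc (0 : ℝ) T,
            ENNReal.ofReal (Real.exp (-lam * (T - t))) ∂f.measure
          ≤ ∫⁻ t in ⋃ k : ℕ, Set.Ioc (T - ((k : ℝ) + 1)) (T - k),
            ENNReal.ofReal (Real.exp (-lam * (T - t))) ∂f.measure :=
            lintegral_mono_set hsub
        _ ≤ ∑' k : ℕ, ∫⁻ t in Set.Ioc (T - ((k : ℝ) + 1)) (T - k),
            ENNReal.ofReal (Real.exp (-lam * (T - t))) ∂f.measure :=
            lintegral_iUnion_le _ _
        _ ≤ ∑' k, c k * D k ω := by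
            refine ENNReal.tsum_le_tsum fun k => ?_
            have hb : ∫⁻ t in Set.Ioc (T - ((k : ℝ) + 1)) (T - k),
                ENNReal.ofReal (Real.exp (-lam * (T - t))) ∂f.measure
                ≤ ∫⁻ _ in Set.Ioc (T - ((k : ℝ) + 1)) (T - k), c k ∂f.measure := by
              refine setLIntegral_mono measurable_const fun t ht => ?_
              refine ENNReal.ofReal_le_ofReal (Real.exp_le_exp.2 ?_)
              have := ht.2
              nlinarith
            refine hb.trans ?_
            rw [setLIntegral_const, f.measure_Ioc]
    calc (∫⁻ t in Set.Ioc (0 : ℝ) T,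
          ENNReal.ofReal (Real.exp (-lam * (T - t))) ∂f.measure) ^ p
        ≤ (∑' k, c k * D k ω) ^ p := ENNReal.rpow_le_rpow hI hp0.le
      _ ≤ ∑' k, (c k * D k ω) ^ p := tsum_rpow_aux hp0 hp1.le
      _ = ∑' k, c k ^ p * D k ω ^ p :=
          tsum_congr fun k => ENNReal.mul_rpow_of_nonneg _ _ hp0.le
  -- per-term moment bound
  have hterm : ∀ k : ℕ, ∫⁻ ω, D k ω ^ p ∂ℙ ≤ ∫⁻ ω, ENNReal.ofReal (X.S 1 ω) ^ p ∂ℙ := by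
    intro k
    by_cases hk : 0 ≤ T - ((k : ℝ) + 1)
    · have hst := X.stationary_increments (T - ((k : ℝ) + 1)) (T - k) hk (by linarith)
      have h1 : (T - (k : ℝ)) - (T - ((k : ℝ) + 1)) = 1 := by ring
      rw [h1] at hst
      have hg : Measurable (fun ω => X.S (T - (k : ℝ)) ω - X.S (T - ((k : ℝ) + 1)) ω) :=
        (X.measurable _).sub (X.measurable _)
      have hfm : Measurable (fun x : ℝ => ENNReal.ofReal x ^ p) :=
        ENNReal.continuous_rpow_const.measurable.comp ENNReal.measurable_ofReal
      refine le_of_eq ?_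
      calc ∫⁻ ω, D k ω ^ p ∂ℙ
          = ∫⁻ x, ENNReal.ofReal x ^ p
            ∂(Measure.map (fun ω => X.S (T - (k : ℝ)) ω - X.S (T - ((k : ℝ) + 1)) ω) ℙ) :=
            (lintegral_map hfm hg).symm
        _ = ∫⁻ x, ENNReal.ofReal x ^ p ∂(Measure.map (X.S 1) ℙ) := by rw [hst]
        _ = ∫⁻ ω, ENNReal.ofReal (X.S 1 ω) ^ p ∂ℙ := lintegral_map hfm (X.measurable 1)
    · push_neg at hk
      refine lintegral_mono_ae ?_
      filter_upwards [X.path] with ω hω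
      have h0 : X.S (T - ((k : ℝ) + 1)) ω = 0 := X.zero_of_nonpos _ hk.le ω
      have hS0 : X.S 0 ω = 0 := X.zero_of_nonpos 0 le_rfl ω
      have hle : X.S (T - (k : ℝ)) ω ≤ X.S 1 ω := by
        by_cases h2 : T - (k : ℝ) ≤ 0
        · rw [X.zero_of_nonpos _ h2 ω]
          have := hω.1 (show (0:ℝ) ≤ 1 by norm_num)
          simpa [hS0] using this
        · exact hω.1 (by linarith)
      refine ENNReal.rpow_le_rpow (ENNReal.ofReal_le_ofReal ?_) hp0.le
      rw [h0]; linarith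
  -- geometric sum
  have hcp : ∀ k : ℕ, c k ^ p = ENNReal.ofReal (Real.exp (-(p * lam))) ^ k := by
    intro k
    rw [hc]
    rw [ENNReal.ofReal_rpow_of_nonneg (Real.exp_nonneg _) hp0.le]
    rw [← Real.exp_mul]
    have : -(lam * (k : ℝ)) * p = (k : ℝ) * (-(p * lam)) := by ring
    rw [this, Real.exp_nat_mul, ENNReal.ofReal_pow (Real.exp_nonneg _)]
  have hplam : 0 < p * lam := mul_pos hp0 hlam
  have hexp1 : Real.exp (-(p * lam)) < 1 := Real.exp_lt_one_iff.2 (by linarith)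
  have hgeom : (∑' k : ℕ, c k ^ p) =
      ENNReal.ofReal (Real.exp (p * lam) / (Real.exp (p * lam) - 1)) := by
    rw [tsum_congr hcp, ENNReal.tsum_geometric]
    have h1 : (1 : ℝ≥0∞) - ENNReal.ofReal (Real.exp (-(p * lam)))
        = ENNReal.ofReal (1 - Real.exp (-(p * lam))) := by
      rw [ENNReal.ofReal_sub 1 (Real.exp_nonneg _), ENNReal.ofReal_one]
    rw [h1, ← ENNReal.ofReal_inv_of_pos (by linarith)]
    congr 1
    have he : (0:ℝ) < Real.exp (p * lam) := Real.exp_pos _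
    rw [Real.exp_neg]
    rw [show 1 - (Real.exp (p * lam))⁻¹ = (Real.exp (p * lam) - 1) / Real.exp (p * lam) by
      field_simp]
    rw [inv_div]
  -- identify the moment integrand
  have hEp : ∫⁻ ω, ENNReal.ofReal (X.S 1 ω) ^ p ∂ℙ
      = ∫⁻ ω, ENNReal.ofReal (X.S 1 ω ^ p) ∂ℙ := by
    refine lintegral_congr_ae ?_
    filter_upwards [X.path] with ω hω
    have hS0 : X.S 0 ω = 0 := X.zero_of_nonpos 0 le_rfl ω
    have h1 : 0 ≤ X.S 1 ω := by
      have := hω.1 (show (0:ℝ) ≤ 1 by norm_num); simpa [hS0] using this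
    rw [ENNReal.ofReal_rpow_of_nonneg h1 hp0.le]
  -- assemble
  calc ∫⁻ ω, (∫⁻ t in Set.Ioc (0 : ℝ) T, ENNReal.ofReal (Real.exp (-lam * (T - t)))
        ∂(pathMeasure (fun t => X.S t ω))) ^ p ∂ℙ
      ≤ ∫⁻ ω, ∑' k, c k ^ p * D k ω ^ p ∂ℙ := lintegral_mono_ae hpoint
    _ = ∑' k, ∫⁻ ω, c k ^ p * D k ω ^ p ∂ℙ :=
        lintegral_tsum fun k => (hmeasD k).aemeasurable
    _ = ∑' k, c k ^ p * ∫⁻ ω, D k ω ^ p ∂ℙ := by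
        refine tsum_congr fun k => ?_
        exact lintegral_const_mul _
          (ENNReal.continuous_rpow_const.measurable.comp
            (((X.measurable _).sub (X.measurable _)).ennreal_ofReal))
    _ ≤ ∑' k, c k ^ p * ∫⁻ ω, ENNReal.ofReal (X.S 1 ω) ^ p ∂ℙ :=
        ENNReal.tsum_le_tsum fun k => mul_le_mul_right (hterm k) _
    _ = (∑' k, c k ^ p) * ∫⁻ ω, ENNReal.ofReal (X.S 1 ω) ^ p ∂ℙ := ENNReal.tsum_mul_right
    _ = ENNReal.ofReal (Real.exp (p * lam) / (Real.exp (p * lam) - 1)) *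
        ∫⁻ ω, ENNReal.ofReal (X.S 1 ω ^ p) ∂ℙ := by rw [hgeom, hEp]
end

section
/- Let S be an α-stable subordinator with index α ∈ (0,1) and let θ ∈ (0, 1/α). Then almost surely, for every T > 0, the integration-by-parts identity ∫_0^T t^{-θ} dS_t = T^{-θ} S_T + θ ∫_0^T t^{-θ-1} S_t dt holds, with both sides finite. -/
open MeasureTheory ProbabilityTheory Filter Set
open scoped ENNReal NNReal Topology

lemma pointwise_key {θ T t : ℝ} (hθ : 0 < θ) (ht : 0 < t) (htT : t ≤ T) :
    ENNReal.ofReal (t ^ (-θ)) =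
      ENNReal.ofReal (T ^ (-θ)) +
        ENNReal.ofReal θ * ∫⁻ s in Ioo t T, ENNReal.ofReal (s ^ (-θ - 1)) := by
  have hT : 0 < T := lt_of_lt_of_le ht htT
  have h0 : (0:ℝ) ∉ uIcc t T := by
    rw [Set.uIcc_of_le htT, Set.mem_Icc]
    push_neg
    intro h; linarith
  have hint : IntervalIntegrable (fun s : ℝ => s ^ (-θ - 1)) volume t T := by
    apply intervalIntegral.intervalIntegrable_rpow
    right; exact h0
  have hval : ∫ s in t..T, s ^ (-θ - 1) = (t ^ (-θ) - T ^ (-θ)) / θ := by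
    rw [integral_rpow (Or.inr ⟨by linarith, h0⟩)]
    have h1 : -θ - 1 + 1 = -θ := by ring
    rw [h1, div_eq_div_iff (neg_ne_zero.mpr hθ.ne') hθ.ne']
    ring
  have hIoo : (∫⁻ s in Ioo t T, ENNReal.ofReal (s ^ (-θ - 1))) =
      ENNReal.ofReal ((t ^ (-θ) - T ^ (-θ)) / θ) := by
    rw [← hval, intervalIntegral.integral_of_le htT,
      ← ofReal_integral_eq_lintegral_ofReal]
    · rw [← setIntegral_congr_set Ioo_ae_eq_Ioc]
    · exact ((intervalIntegrable_iff_integrableOn_Ioc_of_le htT).mp hint).mono_set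
        Ioo_subset_Ioc_self
    · filter_upwards [self_mem_ae_restrict measurableSet_Ioo] with s hs
      have hs0 : 0 < s := ht.trans hs.1
      positivity
  rw [hIoo, ← ENNReal.ofReal_mul hθ.le, mul_div_cancel₀ _ hθ.ne']
  have hle : T ^ (-θ) ≤ t ^ (-θ) := Real.rpow_le_rpow_of_nonpos ht htT (by linarith)
  rw [ENNReal.ofReal_sub _ (by positivity),
    add_tsub_cancel_of_le (ENNReal.ofReal_le_ofReal hle)]

lemma det_ibp {θ T : ℝ} (hθ : 0 < θ) (hT : 0 < T) (f : StieltjesFunction ℝ)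
    (hf0 : f 0 = 0) :
    ∫⁻ t in Ioc (0:ℝ) T, ENNReal.ofReal (t ^ (-θ)) ∂f.measure =
      ENNReal.ofReal (T ^ (-θ) * f T) +
        ENNReal.ofReal θ *
          ∫⁻ s in Ioo (0:ℝ) T, ENNReal.ofReal (s ^ (-θ - 1) * Function.leftLim f s) := by
  set μ := f.measure
  set g : ℝ → ℝ≥0∞ := fun s => ENNReal.ofReal (s ^ (-θ - 1)) with hg
  have hgm : Measurable g := by
    measurability
  set F : ℝ → ℝ≥0∞ := fun t => ∫⁻ s in Ioo t T, g s with hF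
  have hFanti : Antitone F := by
    intro a b hab
    refine lintegral_mono' (Measure.restrict_mono ?_ le_rfl) le_rfl
    intro x hx
    rw [mem_Ioo] at *
    exact ⟨hab.trans_lt hx.1, hx.2⟩
  have hFm : Measurable F := hFanti.measurable
  -- step 1 : rewrite integrand
  have step1 : ∫⁻ t in Ioc (0:ℝ) T, ENNReal.ofReal (t ^ (-θ)) ∂μ =
      ∫⁻ t in Ioc (0:ℝ) T, (ENNReal.ofReal (T ^ (-θ)) + ENNReal.ofReal θ * F t) ∂μ := by
    refine setLIntegral_congr_fun measurableSet_Ioc (fun t ht => ?_)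
    exact pointwise_key hθ ht.1 ht.2
  rw [step1, lintegral_add_left measurable_const, lintegral_const,
    lintegral_const_mul _ (hFm.mono (le_refl _) le_rfl)]
  set G : ℝ × ℝ → ℝ≥0∞ := fun p => if p.1 < p.2 then g p.2 else 0 with hGdef
  have hGm : Measurable G :=
    Measurable.ite (measurableSet_lt measurable_fst measurable_snd)
      (hgm.comp measurable_snd) measurable_const
  have hGind : ∀ t s : ℝ, G (t, s) = (Ioi t).indicator g s := by
    intro t s
    simp only [hGdef, indicator, mem_Ioi]
  have fub : ∫⁻ t in Ioc (0:ℝ) T, F t ∂μ =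
      ∫⁻ s in Ioo (0:ℝ) T, g s * μ (Ioo 0 s) := by
    have h1 : ∫⁻ t in Ioc (0:ℝ) T, F t ∂μ =
        ∫⁻ t in Ioc (0:ℝ) T, ∫⁻ s in Ioo (0:ℝ) T, G (t, s) ∂volume ∂μ := by
      refine setLIntegral_congr_fun measurableSet_Ioc (fun t ht => ?_)
      simp only [hGind]
      rw [lintegral_indicator measurableSet_Ioi _, Measure.restrict_restrict measurableSet_Ioi,
        show Ioi t ∩ Ioo 0 T = Ioo t T from by
          rw [Ioi_inter_Ioo, max_eq_left ht.1.le]]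
    rw [h1, lintegral_lintegral_swap hGm.aemeasurable]
    refine setLIntegral_congr_fun measurableSet_Ioo (fun s hs => ?_)
    have h2 : ∀ t : ℝ, G (t, s) = (Iio s).indicator (fun _ => g s) t := by
      intro t
      simp only [hGdef, indicator, mem_Iio]
    simp only [h2]
    rw [lintegral_indicator measurableSet_Iio _, Measure.restrict_restrict measurableSet_Iio,
      setLIntegral_const,
      show Iio s ∩ Ioc 0 T = Ioo 0 s from by
        ext x
        simp only [mem_inter_iff, mem_Iio, mem_Ioc, mem_Ioo]
        constructor
        · rintro ⟨h1, h2, h3⟩; exact ⟨h2, h1⟩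
        · rintro ⟨h1, h2⟩; exact ⟨h2, h1, h2.le.trans hs.2.le⟩]
  rw [fub, Measure.restrict_apply_univ]
  have hμIoc : μ (Ioc 0 T) = ENNReal.ofReal (f T) := by
    rw [StieltjesFunction.measure_Ioc, hf0, sub_zero]
  congr 1
  · rw [hμIoc, ← ENNReal.ofReal_mul (by positivity)]
  · congr 1
    refine setLIntegral_congr_fun measurableSet_Ioo (fun s hs => ?_)
    have hs0 : (0:ℝ) < s := hs.1
    rw [show μ (Ioo 0 s) = ENNReal.ofReal (Function.leftLim f s) from by
        rw [StieltjesFunction.measure_Ioo, hf0, sub_zero]]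
    rw [← ENNReal.ofReal_mul (by positivity)]

lemma det_ibp' {θ T : ℝ} (hθ : 0 < θ) (hT : 0 < T) (f : StieltjesFunction ℝ)
    (hf0 : f 0 = 0) :
    ∫⁻ t in Ioc (0:ℝ) T, ENNReal.ofReal (t ^ (-θ)) ∂f.measure =
      ENNReal.ofReal (T ^ (-θ) * f T) +
        ENNReal.ofReal θ *
          ∫⁻ s in Ioo (0:ℝ) T, ENNReal.ofReal (s ^ (-θ - 1) * f s) := by
  rw [det_ibp hθ hT f hf0]
  congr 1
  congr 1
  refine lintegral_congr_ae ?_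
  have hD : (volume : Measure ℝ) {x | ¬ContinuousAt f x} = 0 :=
    Set.Countable.measure_zero (Monotone.countable_not_continuousAt f.mono) _
  have : ∀ᵐ s : ℝ, Function.leftLim f s = f s := by
    rw [ae_iff]
    refine measure_mono_null (fun s hs => ?_) hD
    simp only [mem_setOf_eq] at hs ⊢
    intro hcont
    exact hs (leftLim_eq_of_tendsto
      (hcont.tendsto.mono_left nhdsWithin_le_nhds))
  filter_upwards [ae_restrict_of_ae this] with s hs
  rw [hs]

lemma finiteness_lemma {θ γ T c δ : ℝ} (hθ : 0 < θ) (hγ : θ < γ) (hT : 0 < T) (hδ : 0 < δ)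
    (hc : 0 ≤ c) (f : ℝ → ℝ) (hmono : Monotone f) (hf00 : f 0 = 0)
    (hbound : ∀ s ∈ Ioc (0:ℝ) δ, f s ≤ c * s ^ γ) :
    (∫⁻ s in Ioo (0:ℝ) T, ENNReal.ofReal (s ^ (-θ - 1) * f s)) ≠ ∞ := by
  set m := min δ T with hm
  have hm0 : 0 < m := lt_min hδ hT
  have hsplit : Ioo (0:ℝ) T ⊆ Ioc 0 m ∪ Ico m T := by
    intro x hx
    rcases le_or_gt x m with h | h
    · exact Or.inl ⟨hx.1, h⟩
    · exact Or.inr ⟨h.le, hx.2⟩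
  have hfnonneg : ∀ s : ℝ, 0 ≤ s → 0 ≤ f s := fun s hs => hf00 ▸ hmono hs
  have h1 : (∫⁻ s in Ioc (0:ℝ) m, ENNReal.ofReal (s ^ (-θ - 1) * f s)) ≠ ∞ := by
    have hb : ∀ s ∈ Ioc (0:ℝ) m, ENNReal.ofReal (s ^ (-θ - 1) * f s) ≤
        ENNReal.ofReal (c * s ^ (γ - θ - 1)) := by
      intro s hs
      have hs0 : 0 < s := hs.1
      refine ENNReal.ofReal_le_ofReal ?_
      have h2 : f s ≤ c * s ^ γ := hbound s ⟨hs.1, hs.2.trans (min_le_left _ _)⟩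
      calc s ^ (-θ - 1) * f s ≤ s ^ (-θ - 1) * (c * s ^ γ) := by
            refine mul_le_mul_of_nonneg_left h2 (by positivity)
        _ = c * s ^ (γ - θ - 1) := by
            rw [show γ - θ - 1 = -θ - 1 + γ by ring, Real.rpow_add hs0]
            ring
    have hle : (∫⁻ s in Ioc (0:ℝ) m, ENNReal.ofReal (s ^ (-θ - 1) * f s)) ≤
        ∫⁻ s in Ioc (0:ℝ) m, ENNReal.ofReal (c * s ^ (γ - θ - 1)) :=
      setLIntegral_mono' measurableSet_Ioc hb
    have hint : IntegrableOn (fun s : ℝ => c * s ^ (γ - θ - 1)) (Ioc 0 m) := by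
      refine Integrable.const_mul ?_ c
      exact (intervalIntegrable_iff_integrableOn_Ioc_of_le hm0.le).mp
        (intervalIntegral.intervalIntegrable_rpow' (by linarith))
    exact (hle.trans_lt hint.lintegral_lt_top).ne
  have h2 : (∫⁻ s in Ico m T, ENNReal.ofReal (s ^ (-θ - 1) * f s)) ≠ ∞ := by
    have hb : ∀ s ∈ Ico m T, ENNReal.ofReal (s ^ (-θ - 1) * f s) ≤
        ENNReal.ofReal (m ^ (-θ - 1) * f T) := by
      intro s hs
      refine ENNReal.ofReal_le_ofReal ?_
      have hs0 : 0 < s := hm0.trans_le hs.1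
      refine mul_le_mul (Real.rpow_le_rpow_of_nonpos hm0 hs.1 (by linarith))
        (hmono hs.2.le) (hfnonneg s hs0.le) (by positivity)
    have hle := setLIntegral_mono' (μ := volume) measurableSet_Ico hb
    rw [setLIntegral_const] at hle
    refine (hle.trans_lt ?_).ne
    exact ENNReal.mul_lt_top ENNReal.ofReal_lt_top (by simp [Real.volume_Ico])
  exact ne_top_of_le_ne_top (ENNReal.add_ne_top.mpr ⟨h1, h2⟩)
    ((lintegral_mono_set hsplit).trans (lintegral_union_le _ _ _))


lemma path_bound {γ : ℝ} (hγ0 : 0 < γ) {f : ℝ → ℝ} (hmono : Monotone f) {N : ℕ}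
    (h : ∀ n, N ≤ n → f ((2:ℝ)⁻¹ ^ n) ≤ ((2:ℝ)⁻¹ ^ n) ^ γ) :
    ∀ s ∈ Ioc (0:ℝ) ((2:ℝ)⁻¹ ^ N), f s ≤ 2 ^ γ * s ^ γ := by
  intro s hs
  obtain ⟨hs0, hsN⟩ := hs
  have hhalf : (0:ℝ) < 2⁻¹ := by norm_num
  have hex : ∃ k : ℕ, (2:ℝ)⁻¹ ^ k < s := by
    obtain ⟨k, hk⟩ := exists_pow_lt_of_lt_one hs0 (by norm_num : (2:ℝ)⁻¹ < 1)
    exact ⟨k, hk⟩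
  classical
  let k₀ := Nat.find hex
  have hk₀ : (2:ℝ)⁻¹ ^ k₀ < s := Nat.find_spec hex
  have hk₀N : N < k₀ := by
    by_contra hcon
    push_neg at hcon
    have : (2:ℝ)⁻¹ ^ N ≤ (2:ℝ)⁻¹ ^ k₀ :=
      pow_le_pow_of_le_one (by norm_num) (by norm_num) hcon
    linarith
  set n := k₀ - 1 with hn
  have hn1 : n + 1 = k₀ := by omega
  have hnN : N ≤ n := by omega
  have hsn : s ≤ (2:ℝ)⁻¹ ^ n := not_lt.mp (Nat.find_min hex (by omega))
  have h1 : f s ≤ ((2:ℝ)⁻¹ ^ n) ^ γ := (hmono hsn).trans (h n hnN)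
  have h2 : (2:ℝ)⁻¹ ^ n < 2 * s := by
    have : (2:ℝ)⁻¹ ^ n = 2 * (2:ℝ)⁻¹ ^ k₀ := by
      rw [← hn1, pow_succ]
      ring
    rw [this]
    linarith
  calc f s ≤ ((2:ℝ)⁻¹ ^ n) ^ γ := h1
    _ ≤ (2 * s) ^ γ := Real.rpow_le_rpow (by positivity) h2.le hγ0.le
    _ = 2 ^ γ * s ^ γ := Real.mul_rpow (by norm_num) hs0.le



lemma tail_bound {Ω : Type*} [MeasureSpace Ω] [IsProbabilityMeasure (ℙ : Measure Ω)] {α : ℝ}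
    (X : StableSubordinator Ω α) {t a : ℝ} (ht : 0 ≤ t) (ha : 0 < a) :
    (ℙ : Measure Ω) {ω | a < X.S t ω} ≤
      ENNReal.ofReal ((1 - Real.exp (-1))⁻¹ * (t * a ^ (-α))) := by
  set lam := a⁻¹ with hlamdef
  have hlam : 0 < lam := inv_pos.mpr ha
  have hlap := X.laplace lam hlam t ht
  have hSnn : ∀ᵐ ω : Ω, 0 ≤ X.S t ω := by
    filter_upwards [X.path] with ω hω
    have := hω.1 (le_refl t)
    calc (0:ℝ) = X.S 0 ω := (X.zero_of_nonpos 0 le_rfl ω).symm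
      _ ≤ X.S t ω := hω.1 ht
  have hmeas : Measurable fun ω => Real.exp (-lam * X.S t ω) := by
    have := X.measurable t
    fun_prop
  have hint : Integrable (fun ω => Real.exp (-lam * X.S t ω)) ℙ := by
    refine Integrable.mono' (integrable_const 1) hmeas.aestronglyMeasurable ?_
    filter_upwards [hSnn] with ω hω
    rw [Real.norm_eq_abs, abs_of_pos (Real.exp_pos _)]
    rw [Real.exp_le_one_iff]
    have : 0 ≤ lam * X.S t ω := mul_nonneg hlam.le hω
    linarith
  set A : Set Ω := {ω | a < X.S t ω} with hA
  have hAm : MeasurableSet A := measurableSet_lt measurable_const (X.measurable t)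
  have hpt : ∀ᵐ ω : Ω, A.indicator (fun _ => 1 - Real.exp (-lam * a)) ω ≤
      1 - Real.exp (-lam * X.S t ω) := by
    filter_upwards [hSnn] with ω hω
    by_cases hωA : ω ∈ A
    · rw [indicator_of_mem hωA]
      have : Real.exp (-lam * X.S t ω) ≤ Real.exp (-lam * a) := by
        apply Real.exp_le_exp.mpr
        have : a ≤ X.S t ω := le_of_lt hωA
        nlinarith
      linarith
    · rw [indicator_of_notMem hωA]
      have : Real.exp (-lam * X.S t ω) ≤ 1 := by
        rw [Real.exp_le_one_iff]
        have : 0 ≤ lam * X.S t ω := mul_nonneg hlam.le hω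
        linarith
      linarith
  have hIind : Integrable (A.indicator fun _ : Ω => 1 - Real.exp (-lam * a)) ℙ :=
    (integrable_const _).indicator hAm
  have hIrhs : Integrable (fun ω => 1 - Real.exp (-lam * X.S t ω)) ℙ :=
    (integrable_const 1).sub hint
  have hle := integral_mono_ae hIind hIrhs hpt
  rw [integral_indicator_const _ hAm, integral_sub (integrable_const 1) hint, hlap,
    integral_const] at hle
  simp only [measure_univ, ENNReal.toReal_one, one_smul, smul_eq_mul] at hle
  -- hle : (ℙ A).toReal * (1 - exp (-lam * a)) ≤ 1 - exp (-t * lam ^ α)   (roughly)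
  have hlama : lam * a = 1 := inv_mul_cancel₀ ha.ne'
  have hexp : 1 - Real.exp (-(t * lam ^ α)) ≤ t * lam ^ α := by
    have := Real.add_one_le_exp (-(t * lam ^ α))
    linarith
  have hc0 : 0 < 1 - Real.exp (-1) := by
    have : Real.exp (-1) < 1 := Real.exp_lt_one_iff.mpr (by norm_num)
    linarith
  have hkey : (ℙ A).toReal ≤ (1 - Real.exp (-1))⁻¹ * (t * a ^ (-α)) := by
    have h1 : (ℙ A).toReal * (1 - Real.exp (-1)) ≤ t * lam ^ α := by
      have e1 : -lam * a = -1 := by rw [neg_mul, hlama]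
      rw [e1] at hle
      have e2 : -t * lam ^ α = -(t * lam ^ α) := by ring
      rw [e2] at hle
      simp only [measureReal_def, measure_univ, ENNReal.toReal_one, mul_one] at hle
      linarith
    have h2 : lam ^ α = a ^ (-α) :=
      (Real.inv_rpow ha.le α).trans (Real.rpow_neg ha.le α).symm
    rw [← h2, ← le_div_iff₀ hc0] at *
    rw [div_eq_inv_mul] at h1
    exact h1
  calc (ℙ : Measure Ω) A = ENNReal.ofReal ((ℙ A).toReal) := by
        rw [ENNReal.ofReal_toReal (measure_ne_top _ _)]
    _ ≤ _ := ENNReal.ofReal_le_ofReal hkey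

lemma as_eventually_bound {Ω : Type*} [MeasureSpace Ω] [IsProbabilityMeasure (ℙ : Measure Ω)]
    {α : ℝ} (hα : α ∈ Set.Ioo (0 : ℝ) 1) (X : StableSubordinator Ω α) {γ : ℝ} (hγ0 : 0 < γ)
    (hγα : γ * α < 1) :
    ∀ᵐ ω : Ω, ∀ᶠ n : ℕ in atTop, X.S ((2:ℝ)⁻¹ ^ n) ω ≤ ((2:ℝ)⁻¹ ^ n) ^ γ := by
  set u : ℕ → ℝ := fun n => (2:ℝ)⁻¹ ^ n with hu
  have hu0 : ∀ n, 0 < u n := fun n => by positivity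
  set A : ℕ → Set Ω := fun n => {ω | (u n) ^ γ < X.S (u n) ω} with hAdef
  set c0 : ℝ := (1 - Real.exp (-1))⁻¹ with hc0
  have hc00 : 0 ≤ c0 := by
    rw [hc0]
    have h : Real.exp (-1) < 1 := Real.exp_lt_one_iff.mpr (by norm_num)
    have h2 : 0 < 1 - Real.exp (-1) := by linarith
    positivity
  set r : ℝ := (2:ℝ)⁻¹ ^ (1 - γ * α) with hr
  have hr0 : 0 ≤ r := by rw [hr]; positivity
  have hr1 : r < 1 := Real.rpow_lt_one (by norm_num) (by norm_num) (by linarith)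
  have hA_le : ∀ n, (ℙ : Measure Ω) (A n) ≤ ENNReal.ofReal (c0 * r ^ n) := by
    intro n
    have h := tail_bound X (t := u n) (a := (u n) ^ γ) (hu0 n).le
      (Real.rpow_pos_of_pos (hu0 n) γ)
    refine h.trans (le_of_eq ?_)
    congr 1
    rw [hc0]
    congr 1
    have h1 : ((u n) ^ γ) ^ (-α) = (u n) ^ (γ * (-α)) := (Real.rpow_mul (hu0 n).le γ (-α)).symm
    rw [h1]
    have h2 : u n * u n ^ (γ * -α) = u n ^ (1 - γ * α) := by
      nth_rewrite 1 [← Real.rpow_one (u n)]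
      rw [← Real.rpow_add (hu0 n)]
      ring_nf
    rw [h2]
    show ((2:ℝ)⁻¹ ^ n : ℝ) ^ (1 - γ * α) = r ^ n
    rw [← Real.rpow_natCast (2:ℝ)⁻¹ n, ← Real.rpow_mul (by norm_num : (0:ℝ) ≤ 2⁻¹), hr,
      ← Real.rpow_natCast ((2:ℝ)⁻¹ ^ (1 - γ*α)) n,
      ← Real.rpow_mul (by norm_num : (0:ℝ) ≤ 2⁻¹), mul_comm]
  have hsum : (∑' n, (ℙ : Measure Ω) (A n)) ≠ ∞ := by
    have hS : Summable (fun n => c0 * r ^ n) :=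
      (summable_geometric_of_lt_one hr0 hr1).mul_left c0
    refine ne_top_of_le_ne_top ?_ (ENNReal.tsum_le_tsum hA_le)
    rw [← ENNReal.ofReal_tsum_of_nonneg (fun n => by positivity) hS]
    exact ENNReal.ofReal_ne_top
  filter_upwards [ae_eventually_notMem hsum] with ω hω
  filter_upwards [hω] with n hn
  exact not_lt.mp hn

/-- If `θ ∈ (0, 1/α)`, then almost surely, for every `T > 0`,
`∫_0^T t^(-θ) dS_t = T^(-θ) S_T + θ ∫_0^T t^(-θ-1) S_t dt`, with both sides finite. -/
theorem singular_integral_integration_by_parts {Ω : Type*} [MeasureSpace Ω]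
    [IsProbabilityMeasure (ℙ : Measure Ω)] {α : ℝ} (hα : α ∈ Set.Ioo (0 : ℝ) 1)
    (X : StableSubordinator Ω α) {θ : ℝ} (hθ : θ ∈ Set.Ioo 0 (1 / α)) :
    ∀ᵐ ω : Ω, ∀ T : ℝ, 0 < T →
      (∫⁻ t in Set.Ioc (0 : ℝ) T, ENNReal.ofReal (t ^ (-θ))
            ∂(pathMeasure (fun t => X.S t ω)) =
          ENNReal.ofReal (T ^ (-θ) * X.S T ω) +
            ENNReal.ofReal θ *
              ∫⁻ t in Set.Ioo (0 : ℝ) T, ENNReal.ofReal (t ^ (-θ - 1) * X.S t ω)) ∧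
        (∫⁻ t in Set.Ioc (0 : ℝ) T, ENNReal.ofReal (t ^ (-θ))
            ∂(pathMeasure (fun t => X.S t ω))) ≠ ∞ ∧
        (∫⁻ t in Set.Ioo (0 : ℝ) T, ENNReal.ofReal (t ^ (-θ - 1) * X.S t ω)) ≠ ∞ := by
  obtain ⟨hθ0, hθα⟩ := hθ
  obtain ⟨hα0, hα1⟩ := hα
  set γ : ℝ := (θ + 1 / α) / 2 with hγdef
  have hαinv : 0 < 1 / α := by positivity
  have hγ0 : 0 < γ := by rw [hγdef]; linarith
  have hθγ : θ < γ := by rw [hγdef]; linarith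
  have hγinv : γ < 1 / α := by rw [hγdef]; linarith
  have hγα : γ * α < 1 := by
    have h1 : γ * α < (1 / α) * α := mul_lt_mul_of_pos_right hγinv hα0
    have h2 : (1 / α) * α = 1 := by field_simp
    linarith
  filter_upwards [X.path, as_eventually_bound ⟨hα0, hα1⟩ X hγ0 hγα] with ω hpath hev
  intro T hT
  have hcond : Monotone (fun t => X.S t ω) ∧
      ∀ x : ℝ, ContinuousWithinAt (fun t => X.S t ω) (Set.Ici x) x := hpath
  set F : StieltjesFunction ℝ := ⟨fun t => X.S t ω, hcond.1, hcond.2⟩ with hFdef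
  have hμ : pathMeasure (fun t => X.S t ω) = F.measure := by
    rw [pathMeasure, dif_pos hcond]
  have hf0 : F 0 = 0 := X.zero_of_nonpos 0 le_rfl ω
  obtain ⟨N, hN⟩ := Filter.eventually_atTop.mp hev
  have hbound : ∀ s ∈ Set.Ioc (0:ℝ) ((2:ℝ)⁻¹ ^ N), X.S s ω ≤ 2 ^ γ * s ^ γ :=
    path_bound hγ0 hcond.1 hN
  have hfin : (∫⁻ t in Set.Ioo (0 : ℝ) T, ENNReal.ofReal (t ^ (-θ - 1) * X.S t ω)) ≠ ∞ :=
    finiteness_lemma hθ0 hθγ hT (by positivity : (0:ℝ) < (2:ℝ)⁻¹ ^ N)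
      (by positivity : (0:ℝ) ≤ 2 ^ γ) (fun t => X.S t ω) hcond.1
      (X.zero_of_nonpos 0 le_rfl ω) hbound
  have heq : ∫⁻ t in Set.Ioc (0 : ℝ) T, ENNReal.ofReal (t ^ (-θ))
        ∂(pathMeasure (fun t => X.S t ω)) =
      ENNReal.ofReal (T ^ (-θ) * X.S T ω) +
        ENNReal.ofReal θ *
          ∫⁻ t in Set.Ioo (0 : ℝ) T, ENNReal.ofReal (t ^ (-θ - 1) * X.S t ω) := by
    rw [hμ]
    exact det_ibp' hθ0 hT F hf0
  refine ⟨heq, ?_, hfin⟩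
  rw [heq]
  exact ENNReal.add_ne_top.mpr ⟨ENNReal.ofReal_ne_top,
    ENNReal.mul_ne_top ENNReal.ofReal_ne_top hfin⟩
end

section
/- Let S be an α-stable subordinator with index α ∈ (0,1), let θ ∈ (0, 1/α), and let p ∈ (0, α). Then for every T > 0 and every ε ∈ (0, T), E[(∫_ε^T r^{-θ-1} S_r dr)^p] ≤ E[S_1^p] · (2/T)^{θp} · T^{p/α} · Σ_{k=0}^{∞} 2^{kp(θ − 1/α)}, where the geometric series Σ_{k=0}^{∞} 2^{kp(θ − 1/α)} = 1/(1 − 2^{p(θ − 1/α)}) is finite. -/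
open MeasureTheory ProbabilityTheory Filter Set
open scoped ENNReal NNReal Topology

lemma aux_sum_rpow_le (s : Finset ℕ) (a : ℕ → ℝ≥0∞) {p : ℝ} (hp0 : 0 < p) (hp1 : p ≤ 1) :
    (∑ i ∈ s, a i) ^ p ≤ ∑ i ∈ s, a i ^ p := by
  classical
  induction s using Finset.cons_induction with
  | empty => simp [ENNReal.zero_rpow_of_pos hp0]
  | cons i s hi ih =>
    rw [Finset.sum_cons, Finset.sum_cons]
    exact (ENNReal.rpow_add_le_add_rpow _ _ hp0.le hp1).trans (add_le_add_right ih _)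

lemma aux_rpow_tsum_le (a : ℕ → ℝ≥0∞) {p : ℝ} (hp0 : 0 < p) (hp1 : p ≤ 1) :
    (∑' k, a k) ^ p ≤ ∑' k, a k ^ p := by
  have h1 : Tendsto (fun n => (∑ i ∈ Finset.range n, a i) ^ p) atTop
      (𝓝 ((∑' k, a k) ^ p)) :=
    (ENNReal.continuous_rpow_const.tendsto _).comp (ENNReal.tendsto_nat_tsum a)
  refine le_of_tendsto' h1 fun n => ?_
  exact (aux_sum_rpow_le _ a hp0 hp1).trans (ENNReal.sum_le_tsum _)

lemma aux_lintegral_Ioi_comp_mul {g : ℝ → ℝ≥0∞} (hg : Measurable g) {c : ℝ} (hc : 0 < c) :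
    ∫⁻ x in Ioi (0:ℝ), g x = ENNReal.ofReal c * ∫⁻ x in Ioi (0:ℝ), g (c * x) := by
  have h1 : ∫⁻ x in Ioi (0:ℝ), g x ∂(Measure.map (c * ·) volume)
      = ∫⁻ x in (c * ·) ⁻¹' Ioi 0, g (c * x) :=
    setLIntegral_map measurableSet_Ioi hg (measurable_const_mul c)
  rw [Real.map_volume_mul_left hc.ne', preimage_const_mul_Ioi₀ 0 hc, zero_div,
    Measure.restrict_smul, lintegral_smul_measure] at h1
  rw [← h1, smul_eq_mul, abs_of_pos (inv_pos.2 hc), ← mul_assoc, ← ENNReal.ofReal_mul hc.le,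
    mul_inv_cancel₀ hc.ne', ENNReal.ofReal_one, one_mul]


noncomputable def auxK (p : ℝ) : ℝ≥0∞ :=
  ∫⁻ u in Ioi (0:ℝ), ENNReal.ofReal (u ^ (-p-1) * (1 - Real.exp (-u)))

lemma auxK_meas (p : ℝ) :
    Measurable fun u : ℝ => ENNReal.ofReal (u ^ (-p-1) * (1 - Real.exp (-u))) :=
  (((measurable_id.pow measurable_const)).mul
    (measurable_const.sub (measurable_id.neg.exp))).ennreal_ofReal

lemma auxK_pos {p : ℝ} (hp0 : 0 < p) : 0 < auxK p := by
  have hexp1 : Real.exp (-1) < 1 := Real.exp_lt_one_iff.2 (by norm_num)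
  have hc : (0:ℝ) < 2 ^ (-p-1) * (1 - Real.exp (-1)) := by
    have h2 : (0:ℝ) < 2 ^ (-p-1) := Real.rpow_pos_of_pos two_pos _
    nlinarith
  have hsub : ∫⁻ _ in Ioc (1:ℝ) 2, ENNReal.ofReal (2 ^ (-p-1) * (1 - Real.exp (-1)))
      ≤ ∫⁻ u in Ioc (1:ℝ) 2, ENNReal.ofReal (u ^ (-p-1) * (1 - Real.exp (-u))) := by
    refine setLIntegral_mono (auxK_meas p) fun u hu => ?_
    refine ENNReal.ofReal_le_ofReal (mul_le_mul ?_ ?_ (by linarith) (Real.rpow_nonneg (by linarith [hu.1]) _))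
    · exact Real.rpow_le_rpow_of_nonpos (by linarith [hu.1]) hu.2 (by linarith)
    · have := Real.exp_le_exp.2 (by linarith [hu.1] : -u ≤ -1)
      linarith
  have h2 : (0:ℝ≥0∞) < ∫⁻ _ in Ioc (1:ℝ) 2, ENNReal.ofReal (2 ^ (-p-1) * (1 - Real.exp (-1))) := by
    rw [setLIntegral_const, Real.volume_Ioc]
    exact ENNReal.mul_pos (ENNReal.ofReal_pos.2 hc).ne' (by simp)
  calc (0:ℝ≥0∞) < _ := h2
    _ ≤ _ := hsub
    _ ≤ auxK p := lintegral_mono_set (by intro u hu; exact lt_trans one_pos hu.1)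

lemma auxK_lt_top {p : ℝ} (hp0 : 0 < p) (hp1 : p < 1) : auxK p < ∞ := by
  have hsplit : auxK p = (∫⁻ u in Ioc (0:ℝ) 1, ENNReal.ofReal (u ^ (-p-1) * (1 - Real.exp (-u))))
      + ∫⁻ u in Ioi (1:ℝ), ENNReal.ofReal (u ^ (-p-1) * (1 - Real.exp (-u))) := by
    rw [auxK, ← Ioc_union_Ioi_eq_Ioi (zero_le_one : (0:ℝ) ≤ 1),
      lintegral_union measurableSet_Ioi (Ioc_disjoint_Ioi le_rfl)]
  rw [hsplit]
  refine ENNReal.add_lt_top.2 ⟨?_, ?_⟩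
  · have hb : ∫⁻ u in Ioc (0:ℝ) 1, ENNReal.ofReal (u ^ (-p-1) * (1 - Real.exp (-u)))
        ≤ ∫⁻ u in Ioc (0:ℝ) 1, ENNReal.ofReal (u ^ (-p)) := by
      refine setLIntegral_mono ((measurable_id.pow measurable_const).ennreal_ofReal) fun u hu => ?_
      refine ENNReal.ofReal_le_ofReal ?_
      have hu0 : 0 < u := hu.1
      have h1 : 1 - Real.exp (-u) ≤ u := by
        have := Real.add_one_le_exp (-u); linarith
      have hmm : u ^ (-p-1) * u = u ^ (-p) := by
        have := (Real.rpow_add_one hu0.ne' (-p-1)).symm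
        rw [show (-p-1+1 : ℝ) = -p by ring] at this
        rw [← this]
      calc u ^ (-p-1) * (1 - Real.exp (-u)) ≤ u ^ (-p-1) * u :=
            mul_le_mul_of_nonneg_left h1 (Real.rpow_nonneg hu0.le _)
        _ = u ^ (-p) := hmm
    refine hb.trans_lt ?_
    have hi : IntegrableOn (fun u : ℝ => u ^ (-p)) (Ioo (0:ℝ) 1) :=
      (intervalIntegral.integrableOn_Ioo_rpow_iff one_pos).2 (by linarith)
    have heq : ∫⁻ u in Ioc (0:ℝ) 1, ENNReal.ofReal (u ^ (-p))
        = ∫⁻ u in Ioo (0:ℝ) 1, ENNReal.ofReal (u ^ (-p)) := by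
      rw [Measure.restrict_congr_set Ioo_ae_eq_Ioc]
    rw [heq]
    have hfin := hi.hasFiniteIntegral
    rwa [hasFiniteIntegral_iff_ofReal ?_] at hfin
    exact (ae_restrict_mem measurableSet_Ioo).mono fun u hu => Real.rpow_nonneg hu.1.le _
  · have hb : ∫⁻ u in Ioi (1:ℝ), ENNReal.ofReal (u ^ (-p-1) * (1 - Real.exp (-u)))
        ≤ ∫⁻ u in Ioi (1:ℝ), ENNReal.ofReal (u ^ (-p-1)) := by
      refine setLIntegral_mono ((measurable_id.pow measurable_const).ennreal_ofReal) fun u hu => ?_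
      refine ENNReal.ofReal_le_ofReal ?_
      have hu0 : (0:ℝ) < u := lt_trans one_pos hu
      have h2 : 1 - Real.exp (-u) ≤ 1 := by have := Real.exp_pos (-u); linarith
      calc u ^ (-p-1) * (1 - Real.exp (-u)) ≤ u ^ (-p-1) * 1 :=
            mul_le_mul_of_nonneg_left h2 (Real.rpow_nonneg hu0.le _)
        _ = u ^ (-p-1) := mul_one _
    refine hb.trans_lt ?_
    have hi : IntegrableOn (fun u : ℝ => u ^ (-p-1)) (Ioi (1:ℝ)) :=
      integrableOn_Ioi_rpow_of_lt (by linarith) one_pos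
    have hfin := hi.hasFiniteIntegral
    rwa [hasFiniteIntegral_iff_ofReal ?_] at hfin
    exact (ae_restrict_mem measurableSet_Ioi).mono fun u hu =>
      Real.rpow_nonneg (lt_trans one_pos hu).le _

lemma aux_mellin {p : ℝ} (hp0 : 0 < p) {x : ℝ} (hx : 0 ≤ x) :
    ∫⁻ l in Ioi (0:ℝ), ENNReal.ofReal (l ^ (-p-1) * (1 - Real.exp (-l * x))) =
      ENNReal.ofReal (x ^ p) * auxK p := by
  rcases hx.eq_or_lt with h | h
  · simp [← h, Real.zero_rpow hp0.ne']
  · have hmeas : Measurable fun l : ℝ =>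
        ENNReal.ofReal (l ^ (-p-1) * (1 - Real.exp (-l * x))) :=
      ((measurable_id.pow measurable_const).mul
        (measurable_const.sub ((measurable_id.neg.mul measurable_const).exp))).ennreal_ofReal
    have hcongr : ∫⁻ u in Ioi (0:ℝ),
        ENNReal.ofReal ((x⁻¹ * u) ^ (-p-1) * (1 - Real.exp (-(x⁻¹ * u) * x)))
        = ENNReal.ofReal (x ^ (p+1)) * auxK p := by
      rw [auxK, ← lintegral_const_mul' _ _ ENNReal.ofReal_ne_top]
      refine setLIntegral_congr_fun measurableSet_Ioi (fun u hu => ?_)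
      have hu0 : (0:ℝ) < u := hu
      have e1 : -(x⁻¹ * u) * x = -u := by field_simp
      have e2 : (x⁻¹ : ℝ) ^ (-p-1) = x ^ (p+1) := by
        rw [Real.inv_rpow hx, show (-p-1:ℝ) = -(p+1) by ring, Real.rpow_neg hx, inv_inv]
      rw [e1, Real.mul_rpow (inv_nonneg.2 h.le) hu0.le, e2, mul_assoc,
        ENNReal.ofReal_mul (Real.rpow_nonneg hx _)]
    rw [aux_lintegral_Ioi_comp_mul hmeas (inv_pos.2 h), hcongr, ← mul_assoc,
      ← ENNReal.ofReal_mul (inv_nonneg.2 hx)]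
    congr 2
    rw [Real.rpow_add_one h.ne']
    field_simp

lemma StableSubordinator.nonneg {Ω : Type*} [MeasureSpace Ω]
    [IsProbabilityMeasure (ℙ : Measure Ω)] {α : ℝ} (X : StableSubordinator Ω α) :
    ∀ᵐ ω : Ω, ∀ s : ℝ, 0 ≤ X.S s ω := by
  filter_upwards [X.path] with ω hω s
  rcases le_or_gt s 0 with h | h
  · exact (X.zero_of_nonpos s h ω).ge
  · have := hω.1 (le_of_lt h : (0:ℝ) ≤ s)
    simp only at this
    rwa [X.zero_of_nonpos 0 le_rfl ω] at this


lemma moment_scaling {Ω : Type*} [MeasureSpace Ω] [IsProbabilityMeasure (ℙ : Measure Ω)]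
    {α : ℝ} (hα : α ∈ Set.Ioo (0:ℝ) 1) (X : StableSubordinator Ω α) {p : ℝ}
    (hp0 : 0 < p) (hpα : p < α) {t : ℝ} (ht : 0 < t) :
    ∫⁻ ω, ENNReal.ofReal (X.S t ω ^ p) ∂ℙ
      = ENNReal.ofReal (t ^ (p / α)) * ∫⁻ ω, ENNReal.ofReal (X.S 1 ω ^ p) ∂ℙ := by
  obtain ⟨hα0, hα1⟩ := hα
  have hp1 : p < 1 := hpα.trans hα1
  set K : ℝ≥0∞ := auxK p with hKdef
  have hK0 : K ≠ 0 := (auxK_pos hp0).ne'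
  have hKt : K ≠ ∞ := (auxK_lt_top hp0 hp1).ne
  set J : ℝ → ℝ≥0∞ := fun s =>
    ∫⁻ l in Ioi (0:ℝ), ENNReal.ofReal (l ^ (-p-1) * (1 - Real.exp (-s * l ^ α))) with hJdef
  have hEK : ∀ s : ℝ, 0 < s →
      (∫⁻ ω, ENNReal.ofReal (X.S s ω ^ p) ∂ℙ) * K = J s := by
    intro s hs
    have hSmeas := X.measurable s
    have h1 : (∫⁻ ω, ENNReal.ofReal (X.S s ω ^ p) ∂ℙ) * K
        = ∫⁻ ω, ENNReal.ofReal (X.S s ω ^ p) * K ∂ℙ :=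
      (lintegral_mul_const' K _ hKt).symm
    have h2 : ∫⁻ ω, ENNReal.ofReal (X.S s ω ^ p) * K ∂ℙ
        = ∫⁻ ω, ∫⁻ l in Ioi (0:ℝ),
            ENNReal.ofReal (l ^ (-p-1) * (1 - Real.exp (-l * X.S s ω))) ∂ℙ := by
      refine lintegral_congr_ae ?_
      filter_upwards [X.nonneg] with ω hω
      exact (aux_mellin hp0 (hω s)).symm
    have hfmeas : Measurable (Function.uncurry fun (ω : Ω) (l : ℝ) =>
        ENNReal.ofReal (l ^ (-p-1) * (1 - Real.exp (-l * X.S s ω)))) := by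
      apply Measurable.ennreal_ofReal
      exact (measurable_snd.pow measurable_const).mul
        (measurable_const.sub ((measurable_snd.neg.mul (hSmeas.comp measurable_fst))).exp)
    have h3 : ∫⁻ ω, ∫⁻ l in Ioi (0:ℝ),
          ENNReal.ofReal (l ^ (-p-1) * (1 - Real.exp (-l * X.S s ω))) ∂ℙ
        = ∫⁻ l in Ioi (0:ℝ), ∫⁻ ω,
            ENNReal.ofReal (l ^ (-p-1) * (1 - Real.exp (-l * X.S s ω))) ∂ℙ :=
      lintegral_lintegral_swap hfmeas.aemeasurable
    have h4 : (∫⁻ l in Ioi (0:ℝ), ∫⁻ ω,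
          ENNReal.ofReal (l ^ (-p-1) * (1 - Real.exp (-l * X.S s ω))) ∂ℙ) = J s := by
      refine setLIntegral_congr_fun measurableSet_Ioi (fun l hl => ?_)
      have hl0 : (0:ℝ) < l := hl
      have hexp_int : Integrable (fun ω => Real.exp (-l * X.S s ω)) ℙ := by
        refine (integrable_const (1:ℝ)).mono' ?_ ?_
        · exact (((X.measurable s).const_mul (-l)).exp).aestronglyMeasurable
        · filter_upwards [X.nonneg] with ω hω
          rw [Real.norm_eq_abs, abs_of_pos (Real.exp_pos _)]
          exact Real.exp_le_one_iff.2 (by nlinarith [hω s])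
      have hint : Integrable (fun ω => 1 - Real.exp (-l * X.S s ω)) ℙ :=
        (integrable_const 1).sub hexp_int
      have hnn : 0 ≤ᵐ[ℙ] fun ω => 1 - Real.exp (-l * X.S s ω) := by
        filter_upwards [X.nonneg] with ω hω
        have : Real.exp (-l * X.S s ω) ≤ 1 := Real.exp_le_one_iff.2 (by nlinarith [hω s])
        simp only [Pi.zero_apply]; linarith
      have hlap : ∫ ω, (1 - Real.exp (-l * X.S s ω)) ∂ℙ = 1 - Real.exp (-s * l ^ α) := by
        rw [integral_sub (integrable_const 1) hexp_int, integral_const, probReal_univ,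
          one_smul, X.laplace l hl0 s hs.le]
      calc ∫⁻ ω, ENNReal.ofReal (l ^ (-p-1) * (1 - Real.exp (-l * X.S s ω))) ∂ℙ
          = ∫⁻ ω, ENNReal.ofReal (l ^ (-p-1)) *
              ENNReal.ofReal (1 - Real.exp (-l * X.S s ω)) ∂ℙ := by
            simp_rw [← ENNReal.ofReal_mul (Real.rpow_nonneg hl0.le _)]
        _ = ENNReal.ofReal (l ^ (-p-1)) *
              ∫⁻ ω, ENNReal.ofReal (1 - Real.exp (-l * X.S s ω)) ∂ℙ :=
            lintegral_const_mul' _ _ ENNReal.ofReal_ne_top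
        _ = ENNReal.ofReal (l ^ (-p-1)) * ENNReal.ofReal (1 - Real.exp (-s * l ^ α)) := by
            rw [← ofReal_integral_eq_lintegral_ofReal hint hnn, hlap]
        _ = ENNReal.ofReal (l ^ (-p-1) * (1 - Real.exp (-s * l ^ α))) :=
            (ENNReal.ofReal_mul (Real.rpow_nonneg hl0.le _)).symm
    rw [h1, h2, h3, h4]
  have hJs : J t = ENNReal.ofReal (t ^ (p/α)) * J 1 := by
    set c : ℝ := t ^ (-(1/α)) with hcdef
    have hc : 0 < c := Real.rpow_pos_of_pos ht _
    have gmeas : Measurable fun l : ℝ =>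
        ENNReal.ofReal (l ^ (-p-1) * (1 - Real.exp (-t * l ^ α))) :=
      ((measurable_id.pow measurable_const).mul (measurable_const.sub
        ((measurable_const.mul (measurable_id.pow measurable_const)).exp))).ennreal_ofReal
    have hca : c ^ α = t⁻¹ := by
      rw [hcdef, ← Real.rpow_mul ht.le, show (-(1/α) * α : ℝ) = -1 by field_simp,
        Real.rpow_neg_one]
    have hpt : ∫⁻ u in Ioi (0:ℝ),
        ENNReal.ofReal ((c * u) ^ (-p-1) * (1 - Real.exp (-t * (c * u) ^ α)))
        = ENNReal.ofReal (c ^ (-p-1)) * J 1 := by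
      rw [hJdef, ← lintegral_const_mul' _ _ ENNReal.ofReal_ne_top]
      refine setLIntegral_congr_fun measurableSet_Ioi (fun u hu => ?_)
      have hu0 : (0:ℝ) < u := hu
      have e1 : (c * u) ^ (-p-1) = c ^ (-p-1) * u ^ (-p-1) := Real.mul_rpow hc.le hu0.le
      have e2 : -t * (c * u) ^ α = -1 * u ^ α := by
        rw [Real.mul_rpow hc.le hu0.le, hca]; field_simp
      rw [e1, e2, mul_assoc, ENNReal.ofReal_mul (Real.rpow_nonneg hc.le _)]
    have e3 : c * c ^ (-p-1) = t ^ (p/α) := by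
      rw [show c * c ^ (-p-1) = c ^ (1 + (-p-1)) by rw [Real.rpow_add hc, Real.rpow_one],
        show (1 + (-p-1) : ℝ) = -p by ring, hcdef, ← Real.rpow_mul ht.le,
        show (-(1/α) * -p : ℝ) = p/α by ring]
    calc J t = ENNReal.ofReal c * ∫⁻ u in Ioi (0:ℝ),
          ENNReal.ofReal ((c * u) ^ (-p-1) * (1 - Real.exp (-t * (c * u) ^ α))) := by
          rw [hJdef]; exact aux_lintegral_Ioi_comp_mul gmeas hc
      _ = ENNReal.ofReal c * (ENNReal.ofReal (c ^ (-p-1)) * J 1) := by rw [hpt]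
      _ = ENNReal.ofReal (t ^ (p/α)) * J 1 := by
          rw [← mul_assoc, ← ENNReal.ofReal_mul hc.le, e3]
  have h1 := hEK t ht
  have h2 := hEK 1 one_pos
  rw [hJs, ← h2, ← mul_assoc] at h1
  exact (ENNReal.mul_left_inj hK0 hKt).1 h1

/-- If `θ ∈ (0, 1/α)` and `p ∈ (0, α)`, then for every `T > 0` and `ε ∈ (0, T)`,
`E[(∫_ε^T r^(-θ-1) S_r dr)^p] ≤ E[S_1^p] (2/T)^(θp) T^(p/α) ∑_{k=0}^∞ 2^(kp(θ-1/α))`,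
where the geometric series equals `1/(1 - 2^(p(θ-1/α)))` and is finite. -/
theorem truncated_integral_moment_bound {Ω : Type*} [MeasureSpace Ω]
    [IsProbabilityMeasure (ℙ : Measure Ω)] {α : ℝ} (hα : α ∈ Set.Ioo (0 : ℝ) 1)
    (X : StableSubordinator Ω α) {θ p : ℝ} (hθ : θ ∈ Set.Ioo 0 (1 / α))
    (hp : p ∈ Set.Ioo 0 α) :
    ∀ T : ℝ, 0 < T → ∀ ε ∈ Set.Ioo 0 T,
      (∫⁻ ω, (∫⁻ r in Set.Ioo ε T, ENNReal.ofReal (r ^ (-θ - 1) * X.S r ω)) ^ p ∂ℙ ≤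
          (∫⁻ ω, ENNReal.ofReal (X.S 1 ω ^ p) ∂ℙ) *
            ENNReal.ofReal ((2 / T) ^ (θ * p) * T ^ (p / α) *
              ∑' k : ℕ, (2 : ℝ) ^ ((k : ℝ) * p * (θ - 1 / α)))) ∧
        ∑' k : ℕ, (2 : ℝ) ^ ((k : ℝ) * p * (θ - 1 / α)) =
          1 / (1 - (2 : ℝ) ^ (p * (θ - 1 / α))) := by
  obtain ⟨hα0, hα1⟩ := hα
  obtain ⟨hθ0, hθα⟩ := hθ
  obtain ⟨hp0, hpα⟩ := hp
  have hp1 : p < 1 := hpα.trans hα1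
  intro T hT ε hε
  -- the geometric series
  set r : ℝ := 2 ^ (p * (θ - 1/α)) with hrdef
  have hr0 : 0 ≤ r := (Real.rpow_pos_of_pos two_pos _).le
  have hr1 : r < 1 := by
    refine Real.rpow_lt_one_of_one_lt_of_neg one_lt_two ?_
    have h1 : θ - 1/α < 0 := by linarith
    nlinarith
  have hterm : ∀ k : ℕ, (2 : ℝ) ^ ((k : ℝ) * p * (θ - 1/α)) = r ^ k := by
    intro k
    rw [show ((k:ℝ) * p * (θ - 1/α)) = (p * (θ - 1/α)) * (k : ℕ) by push_cast; ring,
      Real.rpow_mul_natCast (by norm_num : (0:ℝ) ≤ 2)]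
  have hsum : ∑' k : ℕ, (2 : ℝ) ^ ((k : ℝ) * p * (θ - 1/α)) = 1 / (1 - r) := by
    simp_rw [hterm]
    rw [tsum_geometric_of_lt_one hr0 hr1, one_div]
  have hsummable : Summable (fun k : ℕ => (2 : ℝ) ^ ((k : ℝ) * p * (θ - 1/α))) :=
    (summable_geometric_of_lt_one hr0 hr1).congr fun k => (hterm k).symm
  refine ⟨?_, hsum⟩
  -- dyadic decomposition
  set E1 : ℝ≥0∞ := ∫⁻ ω, ENNReal.ofReal (X.S 1 ω ^ p) ∂ℙ with hE1def
  set a : ℕ → ℝ := fun k => T / 2 ^ (k + 1) with hadef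
  set b : ℕ → ℝ := fun k => T / 2 ^ k with hbdef
  have ha : ∀ k, 0 < a k := fun k => by positivity
  have hb : ∀ k, 0 < b k := fun k => by positivity
  have hba : ∀ k, b k - a k = a k := by
    intro k
    rw [hbdef, hadef]
    simp only
    rw [pow_succ]
    field_simp
    ring
  have hab : ∀ k, a k ≤ b k := fun k => by nlinarith [hba k, ha k]
  have hcover : Ioo ε T ⊆ ⋃ k : ℕ, Ioc (a k) (b k) := by
    intro x hx
    have hx0 : 0 < x := hε.1.trans hx.1
    have hex : ∃ k : ℕ, T / 2 ^ (k + 1) < x := by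
      obtain ⟨k, hk⟩ := pow_unbounded_of_one_lt (T / x) one_lt_two
      refine ⟨k, ?_⟩
      rw [div_lt_iff₀ (by positivity)]
      have h1 : T / x < 2 ^ (k+1) := hk.trans_le (pow_le_pow_right₀ one_le_two (Nat.le_succ k))
      rw [div_lt_iff₀ hx0] at h1
      linarith
    refine mem_iUnion.2 ⟨Nat.find hex, Nat.find_spec hex, ?_⟩
    rcases Nat.eq_zero_or_pos (Nat.find hex) with h | h
    · rw [hbdef]; simp only [h, pow_zero]
      simpa using hx.2.le
    · have hmin := Nat.find_min hex (Nat.sub_lt h one_pos)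
      rw [not_lt, show Nat.find hex - 1 + 1 = Nat.find hex by omega] at hmin
      exact hmin
  -- pathwise bound
  have hnum : ∀ k : ℕ, (a k ^ (-θ)) ^ p * b k ^ (p/α)
      = (2/T) ^ (θ * p) * T ^ (p/α) * (2:ℝ) ^ ((k:ℝ) * p * (θ - 1/α)) := by
    intro k
    have h2k : (0:ℝ) < 2 ^ k := by positivity
    have h2k1 : (0:ℝ) < 2 ^ (k+1) := by positivity
    have hak := ha k
    have hbk := hb k
    have h2T : (0:ℝ) < 2 / T := by positivity
    rw [Real.rpow_def_of_pos (Real.rpow_pos_of_pos hak _), Real.log_rpow hak,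
      Real.rpow_def_of_pos hbk, Real.rpow_def_of_pos h2T, Real.rpow_def_of_pos hT,
      Real.rpow_def_of_pos two_pos, ← Real.exp_add, ← Real.exp_add, ← Real.exp_add]
    congr 1
    rw [hadef, hbdef]
    simp only
    rw [Real.log_div hT.ne' h2k1.ne', Real.log_div hT.ne' h2k.ne',
      Real.log_div two_ne_zero hT.ne', Real.log_pow, Real.log_pow]
    push_cast
    ring
  have hpathwise : ∀ᵐ ω : Ω,
      (∫⁻ r in Set.Ioo ε T, ENNReal.ofReal (r ^ (-θ - 1) * X.S r ω)) ^ p ≤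
        ∑' k : ℕ, ENNReal.ofReal ((a k ^ (-θ)) ^ p) *
          ENNReal.ofReal (X.S (b k) ω ^ p) := by
    filter_upwards [X.path, X.nonneg] with ω hω hnn
    have hmono := hω.1
    have step1 : (∫⁻ r in Set.Ioo ε T, ENNReal.ofReal (r ^ (-θ - 1) * X.S r ω)) ≤
        ∑' k : ℕ, ∫⁻ r in Ioc (a k) (b k), ENNReal.ofReal (r ^ (-θ - 1) * X.S r ω) :=
      (lintegral_mono_set hcover).trans (lintegral_iUnion_le _ _)
    have step2 : ∀ k : ℕ, (∫⁻ r in Ioc (a k) (b k),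
        ENNReal.ofReal (r ^ (-θ - 1) * X.S r ω)) ≤
          ENNReal.ofReal (a k ^ (-θ) * X.S (b k) ω) := by
      intro k
      have hconst : (∫⁻ _ in Ioc (a k) (b k),
          ENNReal.ofReal (a k ^ (-θ - 1) * X.S (b k) ω))
          = ENNReal.ofReal (a k ^ (-θ - 1) * X.S (b k) ω) * ENNReal.ofReal (a k) := by
        rw [setLIntegral_const, Real.volume_Ioc, hba k]
      have hbnd : (∫⁻ r in Ioc (a k) (b k), ENNReal.ofReal (r ^ (-θ - 1) * X.S r ω))
          ≤ ∫⁻ _ in Ioc (a k) (b k), ENNReal.ofReal (a k ^ (-θ - 1) * X.S (b k) ω) := by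
        refine setLIntegral_mono measurable_const fun x hx => ?_
        refine ENNReal.ofReal_le_ofReal (mul_le_mul ?_ (hmono hx.2) (hnn x)
          (Real.rpow_nonneg (ha k).le _))
        exact Real.rpow_le_rpow_of_nonpos (ha k) hx.1.le (by linarith)
      refine (hbnd.trans_eq hconst).trans_eq ?_
      rw [← ENNReal.ofReal_mul (mul_nonneg (Real.rpow_nonneg (ha k).le _) (hnn _))]
      congr 1
      have h1 : a k ^ (-θ) = a k ^ (-θ-1) * a k := by
        have h2 := Real.rpow_add_one (ha k).ne' (-θ-1)
        rw [show (-θ-1+1 : ℝ) = -θ by ring] at h2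
        exact h2
      rw [h1]; ring
    have step3 : (∫⁻ r in Set.Ioo ε T, ENNReal.ofReal (r ^ (-θ - 1) * X.S r ω)) ≤
        ∑' k : ℕ, ENNReal.ofReal (a k ^ (-θ) * X.S (b k) ω) :=
      step1.trans (ENNReal.tsum_le_tsum step2)
    calc (∫⁻ r in Set.Ioo ε T, ENNReal.ofReal (r ^ (-θ - 1) * X.S r ω)) ^ p
        ≤ (∑' k : ℕ, ENNReal.ofReal (a k ^ (-θ) * X.S (b k) ω)) ^ p :=
          ENNReal.rpow_le_rpow step3 hp0.le
      _ ≤ ∑' k : ℕ, (ENNReal.ofReal (a k ^ (-θ) * X.S (b k) ω)) ^ p :=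
          aux_rpow_tsum_le _ hp0 hp1.le
      _ = ∑' k : ℕ, ENNReal.ofReal ((a k ^ (-θ)) ^ p) *
            ENNReal.ofReal (X.S (b k) ω ^ p) := by
          refine tsum_congr fun k => ?_
          rw [ENNReal.ofReal_rpow_of_nonneg
              (mul_nonneg (Real.rpow_nonneg (ha k).le _) (hnn _)) hp0.le,
            Real.mul_rpow (Real.rpow_nonneg (ha k).le _) (hnn _),
            ENNReal.ofReal_mul (Real.rpow_nonneg (Real.rpow_nonneg (ha k).le _) _)]
  -- integrate
  have hmeasg : ∀ k : ℕ, AEMeasurable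
      (fun ω => ENNReal.ofReal ((a k ^ (-θ)) ^ p) * ENNReal.ofReal (X.S (b k) ω ^ p)) ℙ :=
    fun k => ((((X.measurable (b k)).pow measurable_const).ennreal_ofReal).const_mul
      _).aemeasurable
  calc ∫⁻ ω, (∫⁻ r in Set.Ioo ε T, ENNReal.ofReal (r ^ (-θ - 1) * X.S r ω)) ^ p ∂ℙ
      ≤ ∫⁻ ω, ∑' k : ℕ, ENNReal.ofReal ((a k ^ (-θ)) ^ p) *
          ENNReal.ofReal (X.S (b k) ω ^ p) ∂ℙ := lintegral_mono_ae hpathwise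
    _ = ∑' k : ℕ, ∫⁻ ω, ENNReal.ofReal ((a k ^ (-θ)) ^ p) *
          ENNReal.ofReal (X.S (b k) ω ^ p) ∂ℙ := lintegral_tsum hmeasg
    _ = ∑' k : ℕ, ENNReal.ofReal ((a k ^ (-θ)) ^ p) *
          (ENNReal.ofReal (b k ^ (p/α)) * E1) := by
        refine tsum_congr fun k => ?_
        rw [lintegral_const_mul' _ _ ENNReal.ofReal_ne_top,
          moment_scaling ⟨hα0, hα1⟩ X hp0 hpα (hb k), hE1def]
    _ = ∑' k : ℕ, ENNReal.ofReal ((2/T) ^ (θ * p) * T ^ (p/α) *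
          (2:ℝ) ^ ((k:ℝ) * p * (θ - 1/α))) * E1 := by
        refine tsum_congr fun k => ?_
        rw [← mul_assoc, ← ENNReal.ofReal_mul (Real.rpow_nonneg (Real.rpow_nonneg (ha k).le _) _),
          hnum k]
    _ = ENNReal.ofReal (∑' k : ℕ, (2/T) ^ (θ * p) * T ^ (p/α) *
          (2:ℝ) ^ ((k:ℝ) * p * (θ - 1/α))) * E1 := by
        rw [ENNReal.tsum_mul_right, ENNReal.ofReal_tsum_of_nonneg
          (fun k => by positivity) (hsummable.mul_left _)]
    _ = E1 * ENNReal.ofReal ((2/T) ^ (θ * p) * T ^ (p/α) *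
          ∑' k : ℕ, (2:ℝ) ^ ((k:ℝ) * p * (θ - 1/α))) := by
        rw [mul_comm]
        congr 1
        simp_rw [mul_assoc]
        rw [tsum_mul_left, tsum_mul_left]
end
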